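/- arXiv:1701.07064 — 7 statements merged into one kernel-verified Lean document; each statement's English description precedes it below -/
import Mathlib

section
/- Let N ≥ 2 be an integer and let χ be a nonprincipal Dirichlet character modulo N. Then the value of its Dirichlet L-function at s = 1 satisfies L(χ,1) = −(1/N)·Σ_{m=1}^{N} χ(m)·ψ(m/N), where ψ is the digamma function. -/
open Complex

/-- The digamma function `ψ = Γ'/Γ`. -/
noncomputable def digamma (x : ℝ) : ℝ := deriv Real.Gamma x / Real.Gamma x

section A
open Real

/-- derivative of log Gamma equals digamma -/
lemma deriv_logGamma {x : ℝ} (hx : 0 < x) :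
    deriv (fun y ↦ Real.log (Real.Gamma y)) x = _root_.digamma x := by
  rw [_root_.digamma, ← deriv.log (Real.differentiableAt_Gamma (fun m ↦ by nlinarith [(m.cast_nonneg : (0:ℝ) ≤ m)] : ∀ m : ℕ, x ≠ -m))
    (Real.Gamma_pos_of_pos hx).ne']

lemma logGamma_diff {x : ℝ} (hx : 0 < x) :
    DifferentiableAt ℝ (fun y ↦ Real.log (Real.Gamma y)) x := by
  refine ((Real.differentiableAt_Gamma ?_).log (Real.Gamma_pos_of_pos hx).ne')
  intro m; nlinarith [(m.cast_nonneg : (0:ℝ) ≤ m)]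

end A
section B
open Real Finset

local notation "f" => fun y : ℝ ↦ Real.log (Real.Gamma y)

lemma D_rec {x : ℝ} (hx : 0 < x) :
    deriv f (x + 1) = deriv f x + 1 / x := by
  rw [← deriv_comp_add_const, one_div, ← Real.deriv_log,
    ← deriv_add (logGamma_diff hx) (Real.differentiableAt_log hx.ne')]
  apply Filter.EventuallyEq.deriv_eq
  filter_upwards [eventually_gt_nhds hx] with y hy
  rw [Real.Gamma_add_one hy.ne', Real.log_mul hy.ne' (Real.Gamma_pos_of_pos hy).ne', add_comm]
  rfl

lemma D_rec_nat {x : ℝ} (hx : 0 < x) (n : ℕ) :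
    deriv f (x + n) = deriv f x + ∑ k ∈ range n, 1 / (x + k) := by
  induction n with
  | zero => simp
  | succ n ih =>
    have : x + (n + 1 : ℕ) = (x + n) + 1 := by push_cast; ring
    rw [this, D_rec (by positivity), ih, Finset.sum_range_succ]
    ring

lemma D_one : deriv f 1 = -Real.eulerMascheroniConstant := by
  rw [deriv_logGamma one_pos, _root_.digamma, Real.hasDerivAt_Gamma_one.deriv, Real.Gamma_one,
    div_one]

lemma D_nat (n : ℕ) : deriv f (n + 1) = -Real.eulerMascheroniConstant + ∑ k ∈ range n, 1 / ((k : ℝ) + 1) := by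
  have := D_rec_nat one_pos n
  simp only [add_comm (1:ℝ) (n:ℝ)] at this
  rw [this, D_one]
  congr 1
  exact Finset.sum_congr rfl fun k _ ↦ by rw [add_comm]

lemma D_mono {a b : ℝ} (ha : 0 < a) (hab : a < b) : deriv f a ≤ deriv f b := by
  have hc : ConvexOn ℝ (Set.Ioi 0) f := Real.convexOn_log_Gamma
  have hb : 0 < b := ha.trans hab
  exact (hc.deriv_le_slope ha hb hab (logGamma_diff ha)).trans
    (hc.slope_le_deriv ha hb hab (logGamma_diff hb))

end B
section C
open Real Finset

lemma digamma_hasSum {x : ℝ} (hx : 0 < x) (hx1 : x < 1) :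
    HasSum (fun n : ℕ ↦ 1 / ((n : ℝ) + 1) - 1 / (x + n))
      (_root_.digamma x + Real.eulerMascheroniConstant) := by
  set f : ℝ → ℝ := fun y ↦ Real.log (Real.Gamma y) with hf
  set γ := Real.eulerMascheroniConstant with hγ
  set t : ℕ → ℝ := fun n ↦ 1 / ((n : ℝ) + 1) - 1 / (x + n) with ht
  set S : ℕ → ℝ := fun n ↦ ∑ k ∈ range n, t k with hS
  set H : ℕ → ℝ := fun n ↦ ∑ k ∈ range n, 1 / ((k : ℝ) + 1) with hH
  -- partial sums formula
  have hSn : ∀ n, S n = deriv f x + H n - deriv f (x + n) := by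
    intro n
    have h := D_rec_nat hx n
    simp only [hS, ht, Finset.sum_sub_distrib, hH]
    rw [h]; ring
  have hHsucc : ∀ n : ℕ, H (n + 1) = H n + 1 / ((n : ℝ) + 1) := by
    intro n; simp only [hH, Finset.sum_range_succ]
  -- squeeze bounds
  have hlb : ∀ n : ℕ, deriv f x + γ ≤ S (n + 1) := by
    intro n
    have h1 : deriv f (x + (n + 1 : ℕ)) ≤ deriv f (((n:ℝ) + 1) + 1) := by
      apply D_mono (by positivity)
      push_cast; linarith
    have h2 : deriv f (((n:ℝ) + 1) + 1) = -γ + H (n + 1) := by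
      have := D_nat (n + 1); push_cast at this ⊢; rw [this]
    rw [hSn]; rw [h2] at h1; linarith
  have hub : ∀ n : ℕ, S (n + 1) ≤ deriv f x + γ + 1 / ((n : ℝ) + 1) := by
    intro n
    have h1 : deriv f ((n:ℝ) + 1) ≤ deriv f (x + (n + 1 : ℕ)) := by
      apply D_mono (by positivity)
      push_cast; linarith
    have h2 : deriv f ((n:ℝ) + 1) = -γ + H n := by
      have := D_nat n; rw [this]
    rw [hSn, hHsucc]; rw [h2] at h1; linarith
  -- limit of partial sums
  have hlim : Filter.Tendsto S Filter.atTop (nhds (deriv f x + γ)) := by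
    rw [← Filter.tendsto_add_atTop_iff_nat 1]
    apply tendsto_of_tendsto_of_tendsto_of_le_of_le
      (tendsto_const_nhds) ?_ hlb hub
    have : Filter.Tendsto (fun n : ℕ ↦ 1 / ((n : ℝ) + 1)) Filter.atTop (nhds 0) :=
      tendsto_one_div_add_atTop_nhds_zero_nat
    simpa using tendsto_const_nhds.add this
  -- summability
  have hkey : ∀ n : ℕ, 1 / (x + n) - 1 / ((n : ℝ) + 1) ≤ 1 / x * (1 / ((n : ℝ) + 1)) ^ 2 := by
    intro n
    have h1 : (0:ℝ) < x + n := by positivity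
    have h2 : (0:ℝ) < (n : ℝ) + 1 := by positivity
    have h3 : 1 / x * (1 / ((n : ℝ) + 1)) ^ 2 = 1 / (x * ((n:ℝ) + 1) ^ 2) := by field_simp
    rw [h3, div_sub_div _ _ h1.ne' h2.ne', div_le_div_iff₀ (by positivity) (by positivity)]
    have hx1' : x * ((n:ℝ) + 1) ≤ x + n := by nlinarith [Nat.cast_nonneg (α := ℝ) n]
    nlinarith [Nat.cast_nonneg (α := ℝ) n, sq_nonneg ((n:ℝ)+1), mul_pos h1 h2]
  have hnonneg : ∀ n : ℕ, 0 ≤ 1 / (x + n) - 1 / ((n : ℝ) + 1) := by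
    intro n
    have : (1:ℝ) / ((n:ℝ) + 1) ≤ 1 / (x + n) :=
      one_div_le_one_div_of_le (by positivity) (by linarith)
    linarith
  have hsum2 : Summable (fun n : ℕ ↦ 1 / x * (1 / ((n : ℝ) + 1)) ^ 2) := by
    apply Summable.mul_left
    have : Summable (fun n : ℕ ↦ 1 / ((n : ℝ) ^ 2)) :=
      Real.summable_one_div_nat_pow.mpr one_lt_two
    have h := (summable_nat_add_iff 1).mpr this
    apply h.congr
    intro n; push_cast; rw [div_pow, one_pow]
  have hsummg : Summable (fun n : ℕ ↦ 1 / (x + n) - 1 / ((n : ℝ) + 1)) :=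
    Summable.of_nonneg_of_le hnonneg hkey hsum2
  have hsummt : Summable t := by
    have := hsummg.neg
    apply this.congr
    intro n; simp only [ht]; ring
  have := hsummt.hasSum
  have h2 := this.tendsto_sum_nat
  have h3 : ∑' n, t n = deriv f x + γ := tendsto_nhds_unique h2 hlim
  rw [h3] at this
  rwa [deriv_logGamma hx] at this

end C
section D
open Real Filter Topology HurwitzZeta

lemma rpow_diff_bound {x s : ℝ} (hx : 0 < x) (hx1 : x < 1) (hs1 : 1 < s) (hs2 : s ≤ 2) (n : ℕ) :
    |(x + n) ^ (-s) - ((n : ℝ) + 1) ^ (-s)| ≤ 2 * (x ^ (-3 : ℝ) * ((n : ℝ) + 1) ^ (-2 : ℝ)) := by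
  have ha : (0:ℝ) < x + n := by positivity
  have hb : (0:ℝ) < (n:ℝ) + 1 := by positivity
  have hab : x + (n:ℝ) ≤ (n:ℝ) + 1 := by linarith
  set C : ℝ := 2 * (x ^ (-3 : ℝ) * ((n : ℝ) + 1) ^ (-2 : ℝ)) with hC0
  have hderiv : ∀ t ∈ Set.Icc (x + (n:ℝ)) ((n:ℝ) + 1),
      HasDerivWithinAt (fun t : ℝ ↦ t ^ (-s)) (-s * t ^ (-s - 1))
        (Set.Icc (x + (n:ℝ)) ((n:ℝ) + 1)) t := by
    intro t ht
    have ht0 : (0:ℝ) < t := lt_of_lt_of_le ha ht.1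
    exact (Real.hasDerivAt_rpow_const (Or.inl ht0.ne')).hasDerivWithinAt
  have hCb : ∀ t ∈ Set.Icc (x + (n:ℝ)) ((n:ℝ) + 1), ‖-s * t ^ (-s - 1)‖ ≤ C := by
    intro t ht
    have ht0 : (0:ℝ) < t := lt_of_lt_of_le ha ht.1
    rw [norm_mul, norm_neg, Real.norm_eq_abs, Real.norm_eq_abs,
      abs_of_pos (by linarith), abs_of_pos (Real.rpow_pos_of_pos ht0 _)]
    have e1 : t ^ (-s - 1) ≤ (x + (n:ℝ)) ^ (-s - 1) :=
      Real.rpow_le_rpow_of_nonpos ha ht.1 (by linarith)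
    have e2 : (x + (n:ℝ)) ^ (-s - 1) ≤ (x * ((n:ℝ) + 1)) ^ (-s - 1) := by
      apply Real.rpow_le_rpow_of_nonpos (by positivity) ?_ (by linarith)
      nlinarith [Nat.cast_nonneg (α := ℝ) n]
    have e3 : (x * ((n:ℝ) + 1)) ^ (-s - 1) = x ^ (-s - 1) * ((n:ℝ) + 1) ^ (-s - 1) :=
      Real.mul_rpow hx.le hb.le
    have e4 : x ^ (-s - 1) ≤ x ^ (-3 : ℝ) :=
      Real.rpow_le_rpow_of_exponent_ge hx hx1.le (by linarith)
    have e5 : ((n:ℝ) + 1) ^ (-s - 1) ≤ ((n:ℝ) + 1) ^ (-2 : ℝ) :=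
      Real.rpow_le_rpow_of_exponent_le (by linarith [Nat.cast_nonneg (α := ℝ) n]) (by linarith)
    have p2 : (0:ℝ) < ((n:ℝ) + 1) ^ (-s - 1) := Real.rpow_pos_of_pos hb _
    have p3 : (0:ℝ) ≤ x ^ (-3 : ℝ) := (Real.rpow_pos_of_pos hx _).le
    have key : t ^ (-s - 1) ≤ x ^ (-3:ℝ) * ((n:ℝ) + 1) ^ (-2:ℝ) := by
      calc t ^ (-s - 1) ≤ x ^ (-s - 1) * ((n:ℝ) + 1) ^ (-s - 1) := by
            rw [← e3]; exact e1.trans e2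
      _ ≤ x ^ (-3:ℝ) * ((n:ℝ) + 1) ^ (-2:ℝ) := mul_le_mul e4 e5 p2.le p3
    have ht' : (0:ℝ) < t ^ (-s - 1) := Real.rpow_pos_of_pos ht0 _
    calc s * t ^ (-s - 1) ≤ 2 * t ^ (-s - 1) := by nlinarith
    _ ≤ C := by rw [hC0]; nlinarith
  have hmvt := (convex_Icc (x + (n:ℝ)) ((n:ℝ) + 1)).norm_image_sub_le_of_norm_hasDerivWithin_le
    hderiv hCb (Set.left_mem_Icc.mpr hab) (Set.right_mem_Icc.mpr hab)
  rw [Real.norm_eq_abs, Real.norm_eq_abs] at hmvt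
  have h1x : |(n:ℝ) + 1 - (x + (n:ℝ))| = 1 - x := by
    rw [_root_.abs_of_nonneg (by linarith : (0:ℝ) ≤ (n:ℝ) + 1 - (x + (n:ℝ)))]; ring
  rw [h1x] at hmvt
  have hCnn : 0 ≤ C := by positivity
  calc |(x + n) ^ (-s) - ((n:ℝ) + 1) ^ (-s)|
      = |((n:ℝ) + 1) ^ (-s) - (x + (n:ℝ)) ^ (-s)| := by rw [abs_sub_comm]
  _ ≤ C * (1 - x) := hmvt
  _ ≤ C * 1 := by nlinarith
  _ = C := mul_one _

lemma rpow_tendsto {a : ℝ} (ha : 0 < a) {σ : ℕ → ℝ} (hσ : Filter.Tendsto σ atTop (𝓝 1)) :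
    Filter.Tendsto (fun k ↦ a ^ (-(σ k))) atTop (𝓝 (1 / a)) := by
  have hc : ContinuousAt (fun p : ℝ × ℝ ↦ p.1 ^ p.2) (a, -1) :=
    Real.continuousAt_rpow (a, -1) (Or.inl ha.ne')
  have hpair : Filter.Tendsto (fun k ↦ ((a, -(σ k)) : ℝ × ℝ)) atTop (𝓝 (a, -1)) :=
    tendsto_const_nhds.prodMk_nhds hσ.neg
  have := hc.tendsto.comp hpair
  simpa [Real.rpow_neg_one, one_div, Function.comp_def] using this

end D
section E
open Real Filter Topology HurwitzZeta

set_option maxHeartbeats 2000000 in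
lemma hz_one {x : ℝ} (hx : 0 < x) (hx1 : x < 1) :
    hurwitzZeta (↑x) 1 - riemannZeta 1 =
      -(((Real.eulerMascheroniConstant : ℝ) : ℂ) + ((_root_.digamma x : ℝ) : ℂ)) := by
  have hσ1 : ∀ k : ℕ, 1 < 1 + 1 / ((k : ℝ) + 1) := fun k ↦ by
    have : (0:ℝ) < 1 / ((k:ℝ) + 1) := by positivity
    linarith
  have hσ2 : ∀ k : ℕ, 1 + 1 / ((k : ℝ) + 1) ≤ 2 := fun k ↦ by
    have h1 : 1 / ((k:ℝ) + 1) ≤ 1 := by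
      rw [div_le_one (by positivity)]; linarith [Nat.cast_nonneg (α := ℝ) k]
    linarith
  have hσlim : Tendsto (fun k : ℕ ↦ 1 + 1 / ((k : ℝ) + 1)) atTop (𝓝 1) := by
    have := (tendsto_const_nhds (x := (1:ℝ)) (f := atTop)).add
      tendsto_one_div_add_atTop_nhds_zero_nat
    rwa [add_zero] at this
  -- real dominated convergence
  have hbsum : Summable (fun n : ℕ ↦ 2 * (x ^ (-3 : ℝ) * ((n : ℝ) + 1) ^ (-2 : ℝ))) := by
    apply Summable.mul_left
    apply Summable.mul_left
    have h : Summable (fun n : ℕ ↦ 1 / ((n + 1 : ℕ) : ℝ) ^ 2) :=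
      (summable_nat_add_iff 1).mpr (Real.summable_one_div_nat_pow.mpr one_lt_two)
    apply h.congr
    intro n
    have h2 : ((n:ℝ)+1) ^ (-2:ℝ) = (((n:ℝ)+1) ^ (2:ℝ))⁻¹ := by
      rw [← Real.rpow_neg (by positivity)]
      try norm_num
    have h3 : ((n:ℝ)+1) ^ (2:ℝ) = ((n:ℝ)+1) ^ (2:ℕ) := by
      rw [← Real.rpow_natCast ((n:ℝ)+1) 2]; norm_num
    rw [h2, h3]; push_cast
    try rw [one_div]
  have hT : Tendsto
      (fun k : ℕ ↦ ∑' n : ℕ, ((x + n) ^ (-(1 + 1 / ((k : ℝ) + 1))) -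
        ((n : ℝ) + 1) ^ (-(1 + 1 / ((k : ℝ) + 1)))))
      atTop (𝓝 (∑' n : ℕ, (1 / (x + n) - 1 / ((n : ℝ) + 1)))) := by
    refine tendsto_tsum_of_dominated_convergence (𝓕 := atTop)
      (f := fun (k : ℕ) (n : ℕ) ↦ ((x + n) ^ (-(1 + 1 / ((k : ℝ) + 1))) -
        ((n : ℝ) + 1) ^ (-(1 + 1 / ((k : ℝ) + 1)))))
      (g := fun n : ℕ ↦ 1 / (x + n) - 1 / ((n : ℝ) + 1)) hbsum ?_ ?_
    · intro n
      exact (rpow_tendsto (by positivity) hσlim).sub (rpow_tendsto (by positivity) hσlim)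
    · apply Filter.Eventually.of_forall
      intro k n
      exact rpow_diff_bound hx hx1 (hσ1 k) (hσ2 k) n
  -- identify complex L-values with real tsums
  have hGcont : Continuous (fun s : ℂ ↦ hurwitzZeta (↑x) s - riemannZeta s) := by
    have := differentiable_hurwitzZeta_sub_hurwitzZeta (↑x : UnitAddCircle) 0
    rw [hurwitzZeta_zero] at this
    exact this.continuous
  have hGk : ∀ k : ℕ, hurwitzZeta (↑x) (((1 + 1 / ((k : ℝ) + 1) : ℝ)) : ℂ) -
      riemannZeta (((1 + 1 / ((k : ℝ) + 1) : ℝ)) : ℂ) =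
      ((∑' n : ℕ, ((x + n) ^ (-(1 + 1 / ((k : ℝ) + 1))) -
        ((n : ℝ) + 1) ^ (-(1 + 1 / ((k : ℝ) + 1)))) : ℝ) : ℂ) := by
    intro k
    set s : ℝ := 1 + 1 / ((k : ℝ) + 1) with hsdef
    have hs : 1 < Complex.re ((s : ℝ) : ℂ) := by
      rw [Complex.ofReal_re]; exact hσ1 k
    have h1 := hasSum_hurwitzZeta_of_one_lt_re (a := x) ⟨hx.le, hx1.le⟩ hs
    have h2 := hasSum_hurwitzZeta_of_one_lt_re (a := 1) ⟨zero_le_one, le_refl 1⟩ hs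
    rw [show ((1 : ℝ) : UnitAddCircle) = 0 from AddCircle.coe_period (p := (1:ℝ)), hurwitzZeta_zero] at h2
    have h3 := (h1.sub h2).tsum_eq
    rw [← h3, Complex.ofReal_tsum]
    congr 1
    funext n
    have hxn : (0:ℝ) < x + n := by positivity
    have hn1 : (0:ℝ) < (n:ℝ) + 1 := by positivity
    have c1 : ((n : ℂ) + (x : ℂ)) = (((x + n : ℝ)) : ℂ) := by push_cast; ring
    have c2 : ((n : ℂ) + ((1:ℝ) : ℂ)) = ((((n:ℝ) + 1 : ℝ)) : ℂ) := by push_cast; ring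
    rw [Complex.ofReal_sub, c1, c2, ← Complex.ofReal_cpow hxn.le, ← Complex.ofReal_cpow hn1.le,
      Real.rpow_neg hxn.le, Real.rpow_neg hn1.le]
    push_cast
    rw [one_div, one_div]
  -- take limits
  have hc1 : Tendsto (fun k : ℕ ↦ (((1 + 1 / ((k : ℝ) + 1) : ℝ)) : ℂ)) atTop (𝓝 1) := by
    have := (Complex.continuous_ofReal.tendsto 1).comp hσlim
    simpa [Function.comp_def] using this
  have hlim1 : Tendsto (fun k : ℕ ↦ hurwitzZeta (↑x) (((1 + 1 / ((k : ℝ) + 1) : ℝ)) : ℂ) -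
      riemannZeta (((1 + 1 / ((k : ℝ) + 1) : ℝ)) : ℂ)) atTop
      (𝓝 (hurwitzZeta (↑x) 1 - riemannZeta 1)) :=
    (hGcont.tendsto 1).comp hc1
  have hlim2 : Tendsto (fun k : ℕ ↦ hurwitzZeta (↑x) (((1 + 1 / ((k : ℝ) + 1) : ℝ)) : ℂ) -
      riemannZeta (((1 + 1 / ((k : ℝ) + 1) : ℝ)) : ℂ)) atTop
      (𝓝 (((∑' n : ℕ, (1 / (x + n) - 1 / ((n : ℝ) + 1))) : ℝ) : ℂ)) := by
    rw [show (fun k : ℕ ↦ hurwitzZeta (↑x) (((1 + 1 / ((k : ℝ) + 1) : ℝ)) : ℂ) -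
      riemannZeta (((1 + 1 / ((k : ℝ) + 1) : ℝ)) : ℂ)) = fun k : ℕ ↦
      ((∑' n : ℕ, ((x + n) ^ (-(1 + 1 / ((k : ℝ) + 1))) -
        ((n : ℝ) + 1) ^ (-(1 + 1 / ((k : ℝ) + 1)))) : ℝ) : ℂ) from funext hGk]
    exact (Complex.continuous_ofReal.tendsto _).comp hT
  have heq := tendsto_nhds_unique hlim1 hlim2
  -- evaluate the real tsum via digamma_hasSum
  have hsum := (digamma_hasSum hx hx1).neg
  have heqfun : (fun n : ℕ ↦ -(1 / ((n:ℝ) + 1) - 1 / (x + n))) =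
      fun n : ℕ ↦ 1 / (x + n) - 1 / ((n : ℝ) + 1) := by
    funext n; ring
  rw [heqfun] at hsum
  rw [heq, hsum.tsum_eq]
  push_cast
  ring
end E
section F
open HurwitzZeta Finset

theorem stmt0 (N : ℕ) [NeZero N] (hN : 2 ≤ N) (χ : DirichletCharacter ℂ N) (hχ : χ ≠ 1) :
    DirichletCharacter.LFunction χ 1 =
      -(1 / (N : ℂ)) * ∑ m ∈ Finset.Icc 1 N, χ (m : ZMod N) * (_root_.digamma (m / N) : ℂ) := by
  haveI : Fact (1 < N) := ⟨hN⟩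
  have hN0 : (0:ℝ) < N := by positivity
  have hχ0 : χ (0 : ZMod N) = 0 := χ.map_nonunit (by
    rw [isUnit_zero_iff]
    exact fun h ↦ zero_ne_one h)
  have hsum0 : ∑ j : ZMod N, χ j = 0 := MulChar.sum_eq_zero_of_ne_one hχ
  -- unfold the L-function
  have h1 : DirichletCharacter.LFunction χ 1 =
      (N:ℂ) ^ (-1:ℂ) * ∑ j : ZMod N, χ j * hurwitzZeta (ZMod.toAddCircle j) 1 := rfl
  -- value of each Hurwitz zeta
  have h2 : ∀ j : ZMod N, χ j * hurwitzZeta (ZMod.toAddCircle j) 1 =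
      χ j * riemannZeta 1 - χ j * ((Real.eulerMascheroniConstant : ℝ) : ℂ)
        - χ j * ((_root_.digamma ((j.val : ℝ) / N) : ℝ) : ℂ) := by
    intro j
    rcases eq_or_ne j 0 with rfl | hj
    · rw [hχ0]; ring
    · have hv1 : 1 ≤ j.val := Nat.one_le_iff_ne_zero.mpr (fun h ↦ hj ((ZMod.val_eq_zero j).mp h))
      have hvN : j.val < N := j.val_lt
      have hx : (0:ℝ) < (j.val : ℝ) / N := by
        apply div_pos _ hN0
        exact_mod_cast hv1
      have hx1 : (j.val : ℝ) / N < 1 := by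
        rw [div_lt_one hN0]; exact_mod_cast hvN
      have hval := hz_one hx hx1
      rw [ZMod.toAddCircle_apply, sub_eq_iff_eq_add.mp hval]
      ring
  rw [h1, Finset.sum_congr rfl (fun j _ ↦ h2 j)]
  have h3 : ∑ j : ZMod N, (χ j * riemannZeta 1 - χ j * ((Real.eulerMascheroniConstant : ℝ) : ℂ)
        - χ j * ((_root_.digamma ((j.val : ℝ) / N) : ℝ) : ℂ))
      = -∑ j : ZMod N, χ j * ((_root_.digamma ((j.val : ℝ) / N) : ℝ) : ℂ) := by
    rw [Finset.sum_sub_distrib, Finset.sum_sub_distrib, ← Finset.sum_mul, ← Finset.sum_mul, hsum0]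
    ring
  rw [h3]
  -- reindex the sum
  have e1 : ∑ j : ZMod N, χ j * ((_root_.digamma ((j.val : ℝ) / N) : ℝ) : ℂ)
      = ∑ m ∈ range N, χ (m : ZMod N) * ((_root_.digamma ((m : ℝ) / N) : ℝ) : ℂ) := by
    refine Finset.sum_nbij' (fun j ↦ j.val) (fun m ↦ (m : ZMod N)) ?_ ?_ ?_ ?_ ?_
    · intro j _; exact Finset.mem_range.mpr j.val_lt
    · intro m _; exact Finset.mem_univ _
    · intro j _; exact ZMod.natCast_zmod_val j
    · intro m hm; exact ZMod.val_natCast_of_lt (Finset.mem_range.mp hm)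
    · intro j _; rw [ZMod.natCast_zmod_val]
  have e2 : ∑ m ∈ range N, χ (m : ZMod N) * ((_root_.digamma ((m : ℝ) / N) : ℝ) : ℂ)
      = ∑ m ∈ Finset.Icc 1 N, χ (m : ZMod N) * ((_root_.digamma ((m : ℝ) / N) : ℝ) : ℂ) := by
    have hNpos : 0 < N := by omega
    rw [Finset.range_eq_Ico, Finset.sum_eq_sum_Ico_succ_bot hNpos]
    rw [Nat.cast_zero, hχ0, zero_mul, zero_add]
    rw [← Finset.Ico_add_one_right_eq_Icc, Finset.sum_Ico_succ_top (by omega : 1 ≤ N)]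
    rw [ZMod.natCast_self, hχ0, zero_mul, add_zero]
  rw [e1, e2, show ((-1:ℂ)) = -(1:ℂ) from rfl, Complex.cpow_neg, Complex.cpow_one]
  ring
end F
end

section
/- The product over all primes p ≡ 1 (mod 3) satisfies ∏_{p ≡ 1 mod 3} (p² + 1)/(p² − 1) = (3/(2π²))·( ζ(2, 1/3) − ζ(2, 2/3) ). -/
open Complex Real HurwitzZeta

noncomputable def chi3 : DirichletCharacter ℂ 3 :=
  (quadraticChar (ZMod 3)).ringHomComp (Int.castRingHom ℂ)

noncomputable def vv : Nat.Primes → ℂ :=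
  fun p => if (p:ℕ) % 3 = 1 then (((p:ℕ):ℂ)^2+1)/(((p:ℕ):ℂ)^2-1) else 1

noncomputable def ww : Nat.Primes → ℂ := fun p => if (p:ℕ) = 3 then 9/10 else 1

lemma chi3_zero : chi3 0 = 0 := by simp [chi3, MulChar.ringHomComp]

lemma chi3_one : chi3 1 = 1 := by simp [chi3, MulChar.ringHomComp]

lemma chi3_two : chi3 2 = -1 := by
  have h : quadraticChar (ZMod 3) 2 = -1 := by
    rw [quadraticChar_apply, quadraticCharFun]
    rw [if_neg (by decide), if_neg (by decide)]
  simp [chi3, MulChar.ringHomComp_apply, h]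

lemma hz_diff : hurwitzZeta ((1/3:ℝ):UnitAddCircle) 2 - hurwitzZeta ((2/3:ℝ):UnitAddCircle) 2
    = 9 * LSeries (fun n : ℕ => chi3 n) 2 := by
  have h := ZMod.LFunction_eq_LSeries (fun j : ZMod 3 => chi3 j) (s := 2) (by norm_num)
  rw [ZMod.LFunction] at h
  have hsum : ∑ j : ZMod 3, chi3 j * hurwitzZeta (ZMod.toAddCircle j) 2 =
      hurwitzZeta ((1/3:ℝ):UnitAddCircle) 2 - hurwitzZeta ((2/3:ℝ):UnitAddCircle) 2 := by
    rw [show (Finset.univ : Finset (ZMod 3)) = {0, 1, 2} by decide]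
    rw [Finset.sum_insert (by decide), Finset.sum_insert (by decide), Finset.sum_singleton]
    rw [chi3_zero, chi3_one, chi3_two]
    have t1 : ZMod.toAddCircle (1 : ZMod 3) = ((1/3:ℝ):UnitAddCircle) := by
      rw [ZMod.toAddCircle_apply]; norm_num [ZMod.val_one]
    have t2 : ZMod.toAddCircle (2 : ZMod 3) = ((2/3:ℝ):UnitAddCircle) := by
      rw [ZMod.toAddCircle_apply]
      norm_num [show (2 : ZMod 3).val = 2 by decide]
    rw [t1, t2]; ring
  rw [hsum] at h
  have h9 : ((3:ℕ):ℂ) ^ (-2 : ℂ) = (9:ℂ)⁻¹ := by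
    rw [show (-2:ℂ) = -((2:ℕ):ℂ) by norm_num, cpow_neg, cpow_natCast]; norm_num
  rw [h9] at h
  rw [← h]; ring

lemma prime_cast_facts (p : Nat.Primes) :
    ((p:ℕ):ℂ) ≠ 0 ∧ ((p:ℕ):ℂ)^2 ≠ 1 ∧ ((p:ℕ):ℂ)^4 ≠ 1 := by
  have h2 : 2 ≤ (p:ℕ) := p.prop.two_le
  refine ⟨Nat.cast_ne_zero.mpr p.prop.pos.ne', ?_, ?_⟩
  · rw [show (((p:ℕ):ℂ))^2 = (((p:ℕ)^2 : ℕ) : ℂ) by push_cast; ring,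
      show (1:ℂ) = ((1:ℕ):ℂ) by norm_num, Ne, Nat.cast_inj]
    nlinarith
  · rw [show (((p:ℕ):ℂ))^4 = (((p:ℕ)^4 : ℕ) : ℂ) by push_cast; ring,
      show (1:ℂ) = ((1:ℕ):ℂ) by norm_num, Ne, Nat.cast_inj]
    have := Nat.pow_le_pow_left h2 4
    omega

lemma cpow_neg_two (p : Nat.Primes) : ((p:ℕ):ℂ) ^ (-2:ℂ) = (((p:ℕ):ℂ)^2)⁻¹ := by
  rw [show (-2:ℂ) = -((2:ℕ):ℂ) by norm_num, cpow_neg, cpow_natCast]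

lemma cpow_neg_four (p : Nat.Primes) : ((p:ℕ):ℂ) ^ (-4:ℂ) = (((p:ℕ):ℂ)^4)⁻¹ := by
  rw [show (-4:ℂ) = -((4:ℕ):ℂ) by norm_num, cpow_neg, cpow_natCast]

lemma key_pointwise (p : Nat.Primes) :
    vv p * (1 - ((p:ℕ):ℂ) ^ (-4:ℂ))⁻¹ =
      (1 - ((p:ℕ):ℂ) ^ (-2:ℂ))⁻¹ * (1 - chi3 ((p:ℕ) : ZMod 3) * ((p:ℕ):ℂ) ^ (-2:ℂ))⁻¹ * ww p := by
  obtain ⟨h0, h2, h4⟩ := prime_cast_facts p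
  rw [cpow_neg_two, cpow_neg_four]
  set t : ℂ := ((p:ℕ):ℂ) with ht
  have h2' : t^2 - 1 ≠ 0 := sub_ne_zero.mpr h2
  have h4' : t^4 - 1 ≠ 0 := sub_ne_zero.mpr h4
  have hmod : (p:ℕ) % 3 = 0 ∨ (p:ℕ) % 3 = 1 ∨ (p:ℕ) % 3 = 2 := by omega
  rcases hmod with hm | hm | hm
  · -- p = 3
    have hp3 : (p:ℕ) = 3 := ((Nat.prime_dvd_prime_iff_eq (by norm_num) p.prop).mp
      (Nat.dvd_of_mod_eq_zero hm)).symm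
    have hcast : ((p:ℕ) : ZMod 3) = 0 := by rw [hp3]; decide
    rw [vv, ww, if_neg (by omega), if_pos hp3, hcast]
    rw [chi3_zero, ht, hp3]
    norm_num
  · have hp3 : (p:ℕ) ≠ 3 := by omega
    have hcast : ((p:ℕ) : ZMod 3) = 1 := by
      rw [← ZMod.natCast_mod (p:ℕ) 3, hm]; rfl
    have hchi : chi3 (((p:ℕ)) : ZMod 3) = 1 := by rw [hcast, chi3_one]
    rw [vv, ww, if_pos hm, if_neg hp3, hchi]
    have e2 : (1 - (t^2)⁻¹) = (t^2-1)/t^2 := by field_simp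
    have e4 : (1 - (t^4)⁻¹) = (t^4-1)/t^4 := by field_simp
    rw [e2, e4]
    field_simp
    rw [← ht]
    rw [div_eq_iff h2']; ring
  · have hp3 : (p:ℕ) ≠ 3 := by omega
    have hcast : ((p:ℕ) : ZMod 3) = 2 := by
      rw [← ZMod.natCast_mod (p:ℕ) 3, hm]; rfl
    have hchi : chi3 (((p:ℕ)) : ZMod 3) = -1 := by rw [hcast, chi3_two]
    rw [vv, ww, if_neg (by omega), if_neg hp3, hchi]
    have e2 : (1 - (t^2)⁻¹) = (t^2-1)/t^2 := by field_simp
    have e4 : (1 - (t^4)⁻¹) = (t^4-1)/t^4 := by field_simp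
    have e2' : (1 - (-1) * (t^2)⁻¹) = (t^2+1)/t^2 := by field_simp; ring
    rw [e2, e4, e2']
    rw [one_mul, mul_one, inv_div, inv_div, inv_div, div_mul_div_comm,
      show (t^2-1)*(t^2+1) = t^4 - 1 by ring, show t^2*t^2 = t^4 by ring]

lemma vv_ne_zero (p : Nat.Primes) : vv p ≠ 0 := by
  rw [vv]
  split_ifs with h
  · apply div_ne_zero
    · rw [show (((p:ℕ):ℂ))^2 + 1 = (((p:ℕ)^2+1 : ℕ) : ℂ) by push_cast; ring]
      exact Nat.cast_ne_zero.mpr (by positivity)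
    · exact sub_ne_zero.mpr (prime_cast_facts p).2.1
  · exact one_ne_zero

lemma five_le (p : Nat.Primes) (h : (p:ℕ) % 3 = 1) : 5 ≤ (p:ℕ) := by
  have h2 := p.prop.two_le
  have h4 : (p:ℕ) ≠ 4 := fun hc => (by norm_num : ¬ Nat.Prime 4) (hc ▸ p.prop)
  omega

lemma summable_log_vv : Summable fun p : Nat.Primes => Complex.log (vv p) := by
  have hg : Summable fun p : Nat.Primes => 6 * (1 / ((p:ℕ):ℝ)^2) := by
    have h := (Real.summable_one_div_nat_pow (p := 2)).mpr one_lt_two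
    exact (h.mul_left 6).comp_injective Subtype.val_injective
  refine Summable.of_norm_bounded hg (fun p => ?_)
  by_cases h : (p:ℕ) % 3 = 1
  · have h5 : (5:ℝ) ≤ ((p:ℕ):ℝ) := by exact_mod_cast five_le p h
    have hP2 : (0:ℝ) < ((p:ℕ):ℝ)^2 - 1 := by nlinarith
    have hcast : (((p:ℕ):ℂ))^2 - 1 = ((((p:ℕ):ℝ)^2 - 1 : ℝ) : ℂ) := by push_cast; ring
    have hden : (((p:ℕ):ℂ))^2 - 1 ≠ 0 := by
      rw [hcast]
      exact_mod_cast hP2.ne'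
    have hv : vv p = 1 + 2/((((p:ℕ):ℂ))^2 - 1) := by
      rw [vv, if_pos h]
      field_simp
      ring
    have hnz : ‖(2:ℂ)/((((p:ℕ):ℂ))^2 - 1)‖ = 2/(((p:ℕ):ℝ)^2 - 1) := by
      rw [norm_div, hcast, Complex.norm_real, Real.norm_eq_abs, abs_of_pos hP2]
      norm_num
    have hhalf : ‖(2:ℂ)/((((p:ℕ):ℂ))^2 - 1)‖ ≤ 1/2 := by
      rw [hnz, div_le_div_iff₀ hP2 (by norm_num)]
      nlinarith
    have hb := Complex.norm_log_one_add_half_le_self hhalf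
    rw [← hv] at hb
    refine hb.trans ?_
    rw [hnz, show (3:ℝ)/2 * (2/(((p:ℕ):ℝ)^2 - 1)) = 3/(((p:ℕ):ℝ)^2-1) by ring,
      show (6:ℝ) * (1/((p:ℕ):ℝ)^2) = 6/((p:ℕ):ℝ)^2 by ring,
      div_le_div_iff₀ hP2 (by positivity)]
    nlinarith
  · rw [vv, if_neg h]
    simp only [Complex.log_one, norm_zero]
    positivity

lemma multipliable_vv : Multipliable vv :=
  Complex.multipliable_of_summable_log summable_log_vv

lemma hasProd_ww : HasProd ww (9/10 : ℂ) := by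
  have h := hasProd_single (f := ww) (⟨3, by norm_num⟩ : Nat.Primes)
    (fun b hb => if_neg (fun hc => hb (Subtype.ext hc)))
  simpa [ww] using h

lemma tprod_vv : ∏' p, vv p
    = riemannZeta 2 * LSeries (fun n : ℕ => chi3 n) 2 * (9/10) / riemannZeta 4 := by
  have hk : HasProd (fun p : Nat.Primes => (1 - ((p:ℕ):ℂ) ^ (-4:ℂ))⁻¹) (riemannZeta 4) := by
    have h := riemannZeta_eulerProduct_hasProd (s := 4) (by norm_num)
    convert h using 3
  have h2 : HasProd (fun p : Nat.Primes => (1 - ((p:ℕ):ℂ) ^ (-2:ℂ))⁻¹) (riemannZeta 2) := by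
    have h := riemannZeta_eulerProduct_hasProd (s := 2) (by norm_num)
    convert h using 3
  have hL : HasProd (fun p : Nat.Primes => (1 - chi3 ((p:ℕ) : ZMod 3) * ((p:ℕ):ℂ) ^ (-2:ℂ))⁻¹)
      (LSeries (fun n : ℕ => chi3 n) 2) := by
    have h := DirichletCharacter.LSeries_eulerProduct_hasProd chi3 (s := 2) (by norm_num)
    convert h using 3
  have hmain : (∏' p, vv p) * riemannZeta 4
      = riemannZeta 2 * LSeries (fun n : ℕ => chi3 n) 2 * (9/10) := by
    calc (∏' p, vv p) * riemannZeta 4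
        = ∏' p : Nat.Primes, (vv p * (1 - ((p:ℕ):ℂ) ^ (-4:ℂ))⁻¹) := by
          rw [Multipliable.tprod_mul multipliable_vv hk.multipliable, hk.tprod_eq]
      _ = ∏' p : Nat.Primes, ((1 - ((p:ℕ):ℂ) ^ (-2:ℂ))⁻¹
            * (1 - chi3 ((p:ℕ) : ZMod 3) * ((p:ℕ):ℂ) ^ (-2:ℂ))⁻¹
            * ww p) := tprod_congr key_pointwise
      _ = riemannZeta 2 * LSeries (fun n : ℕ => chi3 n) 2 * (9/10) :=
          ((h2.mul hL).mul hasProd_ww).tprod_eq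
  have h4 : riemannZeta 4 ≠ 0 := riemannZeta_ne_zero_of_one_lt_re (by norm_num)
  rw [eq_div_iff h4]
  exact hmain

theorem stmt7 :
    (∏' p : {p : ℕ // p.Prime ∧ p % 3 = 1}, ((p.1 : ℂ) ^ 2 + 1) / ((p.1 : ℂ) ^ 2 - 1)) =
      (3 / (2 * (π : ℂ) ^ 2)) *
        (hurwitzZeta ((1 / 3 : ℝ) : UnitAddCircle) 2 - hurwitzZeta ((2 / 3 : ℝ) : UnitAddCircle) 2) := by
  have hsupp : Function.mulSupport vv ⊆ {p : Nat.Primes | (p:ℕ) % 3 = 1} := by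
    intro p hp
    by_contra h
    exact hp (by rw [vv, if_neg (by simpa using h)])
  let e : {p : ℕ // p.Prime ∧ p % 3 = 1} ≃ {p : Nat.Primes | (p:ℕ) % 3 = 1} :=
    { toFun := fun q => ⟨⟨q.1, q.2.1⟩, q.2.2⟩
      invFun := fun r => ⟨r.1.1, ⟨r.1.2, r.2⟩⟩
      left_inv := fun _ => rfl
      right_inv := fun _ => rfl }
  have hlhs : (∏' p : {p : ℕ // p.Prime ∧ p % 3 = 1}, ((p.1 : ℂ) ^ 2 + 1) / ((p.1 : ℂ) ^ 2 - 1))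
      = ∏' p, vv p := by
    rw [← tprod_subtype_eq_of_mulSupport_subset hsupp, ← Equiv.tprod_eq e
      (fun x : {p : Nat.Primes | (p:ℕ) % 3 = 1} => vv x.1)]
    refine tprod_congr fun q => ?_
    show _ = vv ⟨q.1, q.2.1⟩
    unfold vv; rw [if_pos q.2.2]
  rw [hlhs, tprod_vv, hz_diff, riemannZeta_two, riemannZeta_four]
  have hpi : ((π:ℂ)) ≠ 0 := Complex.ofReal_ne_zero.mpr Real.pi_ne_zero
  field_simp
  ring
end

section
/- The product over all primes p ≡ 2 (mod 3) satisfies ∏_{p ≡ 2 mod 3} (p² + 1)/(p² − 1) = 4π² / ( 3·( ζ(2, 1/3) − ζ(2, 2/3) ) ). -/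
open Complex Real HurwitzZeta

def e3 : {p : ℕ // p.Prime ∧ p % 3 = 2} ≃ {p : Nat.Primes // (p:ℕ) % 3 = 2} where
  toFun p := ⟨⟨p.1, p.2.1⟩, p.2.2⟩
  invFun q := ⟨q.1.1, q.1.2, q.2⟩
  left_inv p := rfl
  right_inv q := rfl

theorem stmt8 :
    (∏' p : {p : ℕ // p.Prime ∧ p % 3 = 2}, ((p.1 : ℂ) ^ 2 + 1) / ((p.1 : ℂ) ^ 2 - 1)) =
      4 * (π : ℂ) ^ 2 /
        (3 * (hurwitzZeta ((1 / 3 : ℝ) : UnitAddCircle) 2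
          - hurwitzZeta ((2 / 3 : ℝ) : UnitAddCircle) 2)) := by
  classical
  have h2 : (1:ℝ) < (2:ℂ).re := by norm_num
  have hcpow : ∀ z : ℂ, z ^ (-(2:ℂ)) = (z ^ (2:ℕ))⁻¹ := by
    intro z
    rw [show (-(2:ℂ)) = ((-2 : ℤ) : ℂ) by norm_num, cpow_intCast, zpow_neg]
    norm_cast
  -- basic facts about primes
  have hq2 : ∀ p : Nat.Primes, 2 ≤ (p:ℕ) := fun p => p.2.two_le
  have hc0 : ∀ p : Nat.Primes, ((p:ℕ):ℂ)^2 ≠ 0 := fun p =>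
    pow_ne_zero _ (Nat.cast_ne_zero.mpr p.2.pos.ne')
  have hsq : ∀ p : Nat.Primes, ((p:ℕ):ℂ)^2 - 1 ≠ 0 := by
    intro p h
    rw [sub_eq_zero] at h
    have h' : (((p:ℕ)^2 : ℕ) : ℂ) = ((1:ℕ) : ℂ) := by push_cast; rw [h]
    have h'' : (p:ℕ)^2 = 1 := Nat.cast_inj.mp h'
    have := hq2 p
    nlinarith
  have hinv : ∀ p : Nat.Primes, (1:ℂ) - (((p:ℕ):ℂ)^2)⁻¹ ≠ 0 := by
    intro p
    have : (1:ℂ) - (((p:ℕ):ℂ)^2)⁻¹ = (((p:ℕ):ℂ)^2 - 1) * (((p:ℕ):ℂ)^2)⁻¹ := by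
      rw [sub_mul, mul_inv_cancel₀ (hc0 p), one_mul]
    rw [this]
    exact mul_ne_zero (hsq p) (inv_ne_zero (hc0 p))
  -- norm bounds
  have hnorm : ∀ p : Nat.Primes, ‖chi3 ((p:ℕ) : ZMod 3) * (((p:ℕ):ℂ)^2)⁻¹‖ ≤ (((p:ℕ):ℝ)^2)⁻¹ := by
    intro p
    rw [norm_mul, norm_inv, norm_pow, Complex.norm_natCast]
    calc ‖chi3 ((p:ℕ) : ZMod 3)‖ * (((p:ℕ):ℝ)^2)⁻¹
        ≤ 1 * (((p:ℕ):ℝ)^2)⁻¹ := by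
          gcongr
          exact chi3.norm_le_one _
      _ = (((p:ℕ):ℝ)^2)⁻¹ := one_mul _
  have hxlt : ∀ p : Nat.Primes, ‖chi3 ((p:ℕ) : ZMod 3) * (((p:ℕ):ℂ)^2)⁻¹‖ < 1 := by
    intro p
    refine lt_of_le_of_lt (hnorm p) ?_
    have h4 : (4:ℝ) ≤ ((p:ℕ):ℝ)^2 := by
      have := hq2 p
      have : (2:ℝ) ≤ ((p:ℕ):ℝ) := by exact_mod_cast this
      nlinarith
    rw [inv_lt_one_iff₀]
    right; linarith
  have ha0 : ∀ p : Nat.Primes, (1:ℂ) - chi3 ((p:ℕ) : ZMod 3) * (((p:ℕ):ℂ)^2)⁻¹ ≠ 0 := by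
    intro p h
    rw [sub_eq_zero] at h
    have := hxlt p
    rw [← h] at this
    simp at this
  -- summability
  have hsumP : Summable (fun p : Nat.Primes => (((p:ℕ):ℝ)^2)⁻¹) := by
    have h0 : Summable (fun n : ℕ => (((n:ℝ))^2)⁻¹) := by
      simpa [one_div] using Real.summable_one_div_nat_pow.mpr (show 1 < 2 by norm_num)
    exact h0.comp_injective (fun a b h => Subtype.ext h : Function.Injective (fun p : Nat.Primes => (p:ℕ)))
  have hx : Summable (fun p : Nat.Primes => chi3 ((p:ℕ) : ZMod 3) * (((p:ℕ):ℂ)^2)⁻¹) :=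
    Summable.of_norm_bounded hsumP hnorm
  -- the auxiliary product A
  have hlog : Summable (fun p : Nat.Primes =>
      Complex.log (1 - chi3 ((p:ℕ) : ZMod 3) * (((p:ℕ):ℂ)^2)⁻¹)) := hx.clog_one_sub
  set A : ℂ := Complex.exp (∑' p : Nat.Primes,
      Complex.log (1 - chi3 ((p:ℕ) : ZMod 3) * (((p:ℕ):ℂ)^2)⁻¹)) with hAdef
  have hA : HasProd (fun p : Nat.Primes => 1 - chi3 ((p:ℕ) : ZMod 3) * (((p:ℕ):ℂ)^2)⁻¹) A := by
    have h := hlog.hasSum.cexp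
    have hfun : (Complex.exp ∘ fun p : Nat.Primes =>
        (Complex.log (1 - chi3 ((p:ℕ) : ZMod 3) * (((p:ℕ):ℂ)^2)⁻¹)))
        = fun p : Nat.Primes => 1 - chi3 ((p:ℕ) : ZMod 3) * (((p:ℕ):ℂ)^2)⁻¹ :=
      funext fun p => Complex.exp_log (ha0 p)
    rwa [hfun] at h
  -- Euler products
  set Ls : ℂ := LSeries (fun n : ℕ => chi3 n) 2 with hLsdef
  have hL : HasProd (fun p : Nat.Primes => (1 - chi3 ((p:ℕ) : ZMod 3) * (((p:ℕ):ℂ)^2)⁻¹)⁻¹) Ls := by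
    have h := DirichletCharacter.LSeries_eulerProduct_hasProd chi3 h2
    simpa only [hcpow] using h
  have hz : HasProd (fun p : Nat.Primes => (1 - (((p:ℕ):ℂ)^2)⁻¹)⁻¹) (riemannZeta 2) := by
    have h := riemannZeta_eulerProduct_hasProd (s := 2) h2
    simpa only [hcpow] using h
  -- A * Ls = 1
  have hALs : A * Ls = 1 := by
    have h := hA.mul hL
    have hfun : (fun p : Nat.Primes => (1 - chi3 ((p:ℕ) : ZMod 3) * (((p:ℕ):ℂ)^2)⁻¹) *
        (1 - chi3 ((p:ℕ) : ZMod 3) * (((p:ℕ):ℂ)^2)⁻¹)⁻¹) = fun _ : Nat.Primes => (1:ℂ) :=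
      funext fun p => mul_inv_cancel₀ (ha0 p)
    rw [hfun] at h
    exact h.unique hasProd_one
  have hLs0 : Ls ≠ 0 := right_ne_zero_of_mul_eq_one hALs
  have hALs' : Ls * A = 1 := by rw [mul_comm]; exact hALs
  have hAeq : A = Ls⁻¹ := eq_inv_of_mul_eq_one_right hALs'
  -- main product
  have hP := hA.mul hz
  set three : Nat.Primes := ⟨3, Nat.prime_three⟩ with hthree
  have hk : HasProd (fun p : Nat.Primes => if p = three then (8/9 : ℂ) else 1) (8/9 : ℂ) :=
    hasProd_ite_eq three (8/9 : ℂ)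
  have hPk := hP.mul hk
  have key : (fun p : Nat.Primes => (1 - chi3 ((p:ℕ) : ZMod 3) * (((p:ℕ):ℂ)^2)⁻¹) *
        (1 - (((p:ℕ):ℂ)^2)⁻¹)⁻¹ * (if p = three then (8/9 : ℂ) else 1))
      = Set.mulIndicator {p : Nat.Primes | (p:ℕ) % 3 = 2}
          (fun p : Nat.Primes => (((p:ℕ):ℂ)^2 + 1) / ((((p:ℕ):ℂ)^2 - 1))) := by
    funext p
    have hp3 : (p:ℕ) % 3 = 0 ∨ (p:ℕ) % 3 = 1 ∨ (p:ℕ) % 3 = 2 := by omega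
    rcases hp3 with h | h | h
    · have hp : (p:ℕ) = 3 :=
        ((Nat.prime_dvd_prime_iff_eq Nat.prime_three p.2).mp (Nat.dvd_of_mod_eq_zero h)).symm
      have hpe : p = three := Subtype.ext hp
      rw [Set.mulIndicator_of_notMem (by simp [Set.mem_setOf_eq, hp, h])]
      rw [if_pos hpe]
      rw [hpe]
      have h3 : ((3:ℕ) : ZMod 3) = 0 := by decide
      show (1 - chi3 (((3:ℕ) : ZMod 3)) * ((((3:ℕ)):ℂ)^2)⁻¹) * (1 - ((((3:ℕ)):ℂ)^2)⁻¹)⁻¹ * (8/9) = 1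
      rw [h3, chi3_zero]
      norm_num
    · have hchi : chi3 ((p:ℕ) : ZMod 3) = 1 := by
        rw [← ZMod.natCast_mod, h]
        exact chi3_one
      have hne : p ≠ three := by
        intro hpe
        rw [hpe] at h
        simp [hthree] at h
      rw [Set.mulIndicator_of_notMem (by simp [Set.mem_setOf_eq, h])]
      rw [if_neg hne, hchi, one_mul, mul_one]
      exact mul_inv_cancel₀ (hinv p)
    · have hchi : chi3 ((p:ℕ) : ZMod 3) = -1 := by
        rw [← ZMod.natCast_mod, h]
        exact chi3_two
      have hne : p ≠ three := by
        intro hpe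
        rw [hpe] at h
        simp [hthree] at h
      rw [Set.mulIndicator_of_mem (by simp [Set.mem_setOf_eq, h])]
      rw [if_neg hne, hchi, mul_one]
      have h1 := hc0 p
      have h2' := hsq p
      have h3 := hinv p
      field_simp
      rw [div_eq_iff (by simpa [one_div] using h3)]
      linear_combination 2 * (mul_inv_cancel₀ h1)
  rw [key] at hPk
  rw [← hasProd_subtype_iff_mulIndicator] at hPk
  -- transport along the equivalence
  have hPk2 : HasProd (fun p : {p : ℕ // p.Prime ∧ p % 3 = 2} =>
      ((p.1 : ℂ) ^ 2 + 1) / ((p.1 : ℂ) ^ 2 - 1)) (A * riemannZeta 2 * (8/9)) := by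
    have := (e3.hasProd_iff).mpr hPk
    exact this
  rw [hPk2.tprod_eq, riemannZeta_two, hAeq]
  -- Hurwitz zeta side
  have hD : hurwitzZeta ((1 / 3 : ℝ) : UnitAddCircle) 2
      - hurwitzZeta ((2 / 3 : ℝ) : UnitAddCircle) 2 = 9 * Ls := by
    have hLf : ZMod.LFunction (fun j : ZMod 3 => chi3 j) 2 = Ls :=
      ZMod.LFunction_eq_LSeries _ h2
    rw [ZMod.LFunction] at hLf
    have hsum3 : ∀ f : ZMod 3 → ℂ, ∑ j : ZMod 3, f j = f 0 + f 1 + f 2 := by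
      intro f
      have huniv : (Finset.univ : Finset (ZMod 3)) = {0, 1, 2} := by decide
      rw [huniv, Finset.sum_insert (by decide), Finset.sum_insert (by decide),
        Finset.sum_singleton]
      ring
    rw [hsum3] at hLf
    have hv1 : ZMod.toAddCircle (1 : ZMod 3) = ((1 / 3 : ℝ) : UnitAddCircle) := by
      rw [ZMod.toAddCircle_apply]
      norm_num [show ((1 : ZMod 3)).val = 1 from rfl]
    have hv2 : ZMod.toAddCircle (2 : ZMod 3) = ((2 / 3 : ℝ) : UnitAddCircle) := by
      rw [ZMod.toAddCircle_apply]
      norm_num [show ((2 : ZMod 3)).val = 2 from rfl]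
    rw [chi3_zero, chi3_one, chi3_two, hv1, hv2] at hLf
    have h9 : ((3:ℕ):ℂ) ^ (-(2:ℂ)) = (9:ℂ)⁻¹ := by
      rw [hcpow]; norm_num
    rw [h9] at hLf
    rw [← hLf]
    ring
  rw [hD]
  field_simp
  ring
end

section
/- The product over all primes p congruent to 2 or 3 modulo 5 satisfies ∏_{p ≡ 2,3 mod 5} (p² − 1)/(p² + 1) = 1/√5. -/
open Real

private def χ (n : ℕ) : ℝ :=
  if n % 5 = 1 ∨ n % 5 = 4 then 1 else if n % 5 = 2 ∨ n % 5 = 3 then -1 else 0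

private def υ (n : ℕ) : ℝ := if n % 5 = 0 then 0 else 1

private lemma χ_mul (m n : ℕ) : χ (m*n) = χ m * χ n := by
  have hm : m % 5 = 0 ∨ m % 5 = 1 ∨ m % 5 = 2 ∨ m % 5 = 3 ∨ m % 5 = 4 := by omega
  have hn : n % 5 = 0 ∨ n % 5 = 1 ∨ n % 5 = 2 ∨ n % 5 = 3 ∨ n % 5 = 4 := by omega
  unfold χ; rw [Nat.mul_mod]
  rcases hm with h|h|h|h|h <;> rcases hn with h'|h'|h'|h'|h' <;> rw [h, h'] <;> norm_num

private lemma υ_mul (m n : ℕ) : υ (m*n) = υ m * υ n := by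
  have hm : m % 5 = 0 ∨ m % 5 = 1 ∨ m % 5 = 2 ∨ m % 5 = 3 ∨ m % 5 = 4 := by omega
  have hn : n % 5 = 0 ∨ n % 5 = 1 ∨ n % 5 = 2 ∨ n % 5 = 3 ∨ n % 5 = 4 := by omega
  unfold υ; rw [Nat.mul_mod]
  rcases hm with h|h|h|h|h <;> rcases hn with h'|h'|h'|h'|h' <;> rw [h, h'] <;> norm_num

private noncomputable def F : ℕ →*₀ ℝ where
  toFun n := χ n / (n : ℝ)^2
  map_zero' := by simp [χ]
  map_one' := by simp [χ]
  map_mul' m n := by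
    show χ (m*n) / ((m*n : ℕ):ℝ)^2 = _
    rw [χ_mul, Nat.cast_mul, mul_pow, div_mul_div_comm]

private noncomputable def G : ℕ →*₀ ℝ where
  toFun n := υ n / (n : ℝ)^2
  map_zero' := by simp [υ]
  map_one' := by simp [υ]
  map_mul' m n := by
    show υ (m*n) / ((m*n : ℕ):ℝ)^2 = _
    rw [υ_mul, Nat.cast_mul, mul_pow, div_mul_div_comm]

private lemma abs_χ_le (n : ℕ) : |χ n| ≤ 1 := by
  unfold χ; split_ifs <;> norm_num

private lemma abs_υ_le (n : ℕ) : |υ n| ≤ 1 := by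
  unfold υ; split_ifs <;> norm_num

private lemma h2sum : Summable (fun n : ℕ => 1/(n:ℝ)^2) :=
  Real.summable_one_div_nat_pow.mpr one_lt_two

private lemma F_apply (n : ℕ) : F n = χ n / (n:ℝ)^2 := rfl
private lemma G_apply (n : ℕ) : G n = υ n / (n:ℝ)^2 := rfl

private lemma norm_le (c : ℝ) (hc : |c| ≤ 1) (n : ℕ) : ‖c / (n:ℝ)^2‖ ≤ 1/(n:ℝ)^2 := by
  rw [Real.norm_eq_abs, abs_div, abs_of_nonneg (by positivity : (0:ℝ) ≤ (n:ℝ)^2)]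
  gcongr

private lemma sumF : Summable (fun n => ‖F n‖) :=
  h2sum.of_nonneg_of_le (fun n => norm_nonneg _)
    (fun n => by rw [F_apply]; exact norm_le _ (abs_χ_le n) n)

private lemma sumG : Summable (fun n => ‖G n‖) :=
  h2sum.of_nonneg_of_le (fun n => norm_nonneg _)
    (fun n => by rw [G_apply]; exact norm_le _ (abs_υ_le n) n)

private lemma sqrt5_sq : Real.sqrt 5 ^ 2 = 5 := Real.sq_sqrt (by norm_num)
private lemma sqrt5_pos : 0 < Real.sqrt 5 := Real.sqrt_pos.mpr (by norm_num)

private lemma cos2pi5 : Real.cos (2*π/5) = (Real.sqrt 5 - 1)/4 := by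
  have h := Real.cos_pi_div_five
  have h2 : Real.cos (2*(π/5)) = 2 * Real.cos (π/5)^2 - 1 := Real.cos_two_mul _
  rw [show 2*π/5 = 2*(π/5) by ring, h2, h]
  nlinarith [sqrt5_sq]

private lemma cos4pi5 : Real.cos (4*π/5) = -(1 + Real.sqrt 5)/4 := by
  have h2 : Real.cos (2*(2*π/5)) = 2 * Real.cos (2*π/5)^2 - 1 := Real.cos_two_mul _
  rw [show 4*π/5 = 2*(2*π/5) by ring, h2, cos2pi5]
  nlinarith [sqrt5_sq]

private lemma cos6pi5 : Real.cos (6*π/5) = -(1 + Real.sqrt 5)/4 := by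
  rw [show 6*π/5 = 2*π - 4*π/5 by ring, Real.cos_two_pi_sub, cos4pi5]

private lemma cos8pi5 : Real.cos (8*π/5) = (Real.sqrt 5 - 1)/4 := by
  rw [show 8*π/5 = 2*π - 2*π/5 by ring, Real.cos_two_pi_sub, cos2pi5]

private lemma cos12pi5 : Real.cos (12*π/5) = (Real.sqrt 5 - 1)/4 := by
  rw [show 12*π/5 = 2*π/5 + 2*π by ring, Real.cos_add_two_pi, cos2pi5]

private lemma cos16pi5 : Real.cos (16*π/5) = -(1 + Real.sqrt 5)/4 := by
  rw [show 16*π/5 = 6*π/5 + 2*π by ring, Real.cos_add_two_pi, cos6pi5]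

private lemma pointwise (n : ℕ) :
    2/Real.sqrt 5 * (1/(n:ℝ)^2 * Real.cos (2*π*n*(1/5)) - 1/(n:ℝ)^2 * Real.cos (2*π*n*(2/5)))
      = χ n / (n:ℝ)^2 := by
  have h0 : Real.sqrt 5 ≠ 0 := sqrt5_pos.ne'
  obtain ⟨q, r, hr, rfl⟩ : ∃ q r, r < 5 ∧ n = 5*q + r :=
    ⟨n/5, n%5, Nat.mod_lt _ (by norm_num), by omega⟩
  have e1 : 2*π*((5*q+r : ℕ):ℝ)*(1/5) = 2*(r:ℝ)*π/5 + (q:ℤ)*(2*π) := by push_cast; ring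
  have e2 : 2*π*((5*q+r : ℕ):ℝ)*(2/5) = 4*(r:ℝ)*π/5 + ((2*q : ℤ))*(2*π) := by push_cast; ring
  rw [e1, e2, Real.cos_add_int_mul_two_pi, Real.cos_add_int_mul_two_pi]
  have hmod : (5*q+r) % 5 = r % 5 := by omega
  interval_cases r
  · simp [χ, hmod]
  · rw [show 2*((1:ℕ):ℝ)*π/5 = 2*π/5 by push_cast; ring,
        show 4*((1:ℕ):ℝ)*π/5 = 4*π/5 by push_cast; ring, cos2pi5, cos4pi5]
    simp only [χ, hmod]
    norm_num
    field_simp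
    ring
  · rw [show 2*((2:ℕ):ℝ)*π/5 = 4*π/5 by push_cast; ring,
        show 4*((2:ℕ):ℝ)*π/5 = 8*π/5 by push_cast; ring, cos4pi5, cos8pi5]
    simp only [χ, hmod]
    norm_num
    field_simp
    ring
  · rw [show 2*((3:ℕ):ℝ)*π/5 = 6*π/5 by push_cast; ring,
        show 4*((3:ℕ):ℝ)*π/5 = 12*π/5 by push_cast; ring, cos6pi5, cos12pi5]
    simp only [χ, hmod]
    norm_num
    field_simp
    ring
  · rw [show 2*((4:ℕ):ℝ)*π/5 = 8*π/5 by push_cast; ring,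
        show 4*((4:ℕ):ℝ)*π/5 = 16*π/5 by push_cast; ring, cos8pi5, cos16pi5]
    simp only [χ, hmod]
    norm_num
    field_simp
    ring

private lemma bern2 (x : ℝ) : (Polynomial.map (algebraMap ℚ ℝ) (Polynomial.bernoulli 2)).eval x
    = x^2 - x + 1/6 := by
  have hb : (bernoulli 2 : ℚ) = 1/6 := by
    rw [bernoulli_eq_bernoulli'_of_ne_one (by norm_num), bernoulli'_two]
  simp [Polynomial.bernoulli, Finset.sum_range_succ, hb]
  ring

private lemma hasSum_F : HasSum (fun n : ℕ => F n) (4*π^2/(25*Real.sqrt 5)) := by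
  have h1 := hasSum_one_div_nat_pow_mul_cos (k := 1) one_ne_zero
    (x := (1/5 : ℝ)) ⟨by norm_num, by norm_num⟩
  have h2 := hasSum_one_div_nat_pow_mul_cos (k := 1) one_ne_zero
    (x := (2/5 : ℝ)) ⟨by norm_num, by norm_num⟩
  have key := (h1.sub h2).mul_left (2/Real.sqrt 5)
  have hfun : (fun n : ℕ => 2/Real.sqrt 5 *
      (1/(n:ℝ)^(2*1) * Real.cos (2*π*n*(1/5)) - 1/(n:ℝ)^(2*1) * Real.cos (2*π*n*(2/5))))
      = fun n : ℕ => F n := by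
    funext n
    rw [show 2*1 = 2 from rfl, F_apply]
    exact pointwise n
  rw [hfun] at key
  convert key using 1
  · rfl
  rw [bern2, bern2]
  have h0 : Real.sqrt 5 ≠ 0 := sqrt5_pos.ne'
  norm_num [Nat.factorial]
  field_simp
  ring

private lemma hasSum_G : HasSum (fun n : ℕ => G n) (4*π^2/25) := by
  have hz : HasSum (fun n : ℕ => 1/(n:ℝ)^2) (π^2/6) := hasSum_zeta_two
  have hinj : Function.Injective (fun k : ℕ => 5*k) :=
    fun a b h => Nat.eq_of_mul_eq_mul_left (by norm_num) h
  have hd : HasSum (fun n : ℕ => if n % 5 = 0 then 1/(n:ℝ)^2 else 0) (π^2/150) := by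
    refine (Function.Injective.hasSum_iff hinj ?_).mp ?_
    · intro n hn
      rw [if_neg]
      intro h
      refine hn ⟨n/5, ?_⟩
      show 5 * (n/5) = n
      omega
    · have heq : ((fun n : ℕ => if n % 5 = 0 then 1/(n:ℝ)^2 else 0) ∘ (fun k : ℕ => 5*k))
          = fun k : ℕ => 1/25 * (1/(k:ℝ)^2) := by
        funext k
        show (if (5*k) % 5 = 0 then 1/((5*k:ℕ):ℝ)^2 else 0) = _
        rw [if_pos (by omega)]
        push_cast
        ring
      rw [heq, show (π^2/150 : ℝ) = 1/25 * (π^2/6) by ring]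
      exact hz.mul_left _
  have key := hz.sub hd
  have hfun : (fun n : ℕ => 1/(n:ℝ)^2 - (if n % 5 = 0 then 1/(n:ℝ)^2 else 0))
      = fun n : ℕ => G n := by
    funext n
    rw [G_apply]
    unfold υ
    split_ifs <;> ring
  rw [hfun] at key
  convert key using 1
  · rfl
  ring

private lemma one_sub_F_ne (p : Nat.Primes) : (1 : ℝ) - F p.1 ≠ 0 := by
  have hp2 : (2:ℝ) ≤ (p.1:ℝ) := by exact_mod_cast p.2.two_le
  have h4 : (4:ℝ) ≤ (p.1:ℝ)^2 := by nlinarith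
  have := norm_le (χ p.1) (abs_χ_le p.1) p.1
  rw [Real.norm_eq_abs] at this
  have hlt : |F p.1| < 1 := by
    rw [F_apply]
    calc |χ p.1 / (p.1:ℝ)^2| ≤ 1/(p.1:ℝ)^2 := this
    _ ≤ 1/4 := by gcongr
    _ < 1 := by norm_num
  intro h
  rw [sub_eq_zero] at h
  rw [← h] at hlt
  simp at hlt

private lemma one_sub_G_ne (p : Nat.Primes) : (1 : ℝ) - G p.1 ≠ 0 := by
  have hp2 : (2:ℝ) ≤ (p.1:ℝ) := by exact_mod_cast p.2.two_le
  have h4 : (4:ℝ) ≤ (p.1:ℝ)^2 := by nlinarith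
  have := norm_le (υ p.1) (abs_υ_le p.1) p.1
  rw [Real.norm_eq_abs] at this
  have hlt : |G p.1| < 1 := by
    rw [G_apply]
    calc |υ p.1 / (p.1:ℝ)^2| ≤ 1/(p.1:ℝ)^2 := this
    _ ≤ 1/4 := by gcongr
    _ < 1 := by norm_num
  intro h
  rw [sub_eq_zero] at h
  rw [← h] at hlt
  simp at hlt

private noncomputable def H : Nat.Primes → ℝ := fun p => (1 - F p.1)⁻¹ / (1 - G p.1)⁻¹

private lemma hasProdH : HasProd H ((4*π^2/(25*Real.sqrt 5)) / (4*π^2/25)) := by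
  have hF := EulerProduct.eulerProduct_completely_multiplicative_hasProd (f := F) sumF
  have hG := EulerProduct.eulerProduct_completely_multiplicative_hasProd (f := G) sumG
  rw [hasSum_F.tsum_eq] at hF
  rw [hasSum_G.tsum_eq] at hG
  have hB : (4*π^2/25 : ℝ) ≠ 0 := by positivity
  have key : ∀ s : Finset Nat.Primes,
      ∏ p ∈ s, H p = (∏ p ∈ s, (1 - F p.1)⁻¹) / (∏ p ∈ s, (1 - G p.1)⁻¹) := fun s => by
    rw [← Finset.prod_div_distrib]
    rfl
  have : Filter.Tendsto (fun s : Finset Nat.Primes => ∏ p ∈ s, H p) Filter.atTop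
      (nhds ((4*π^2/(25*Real.sqrt 5)) / (4*π^2/25))) := by
    simp only [key]
    exact Filter.Tendsto.div hF hG hB
  exact this

private lemma suppH :
    Function.mulSupport H ⊆ {p : Nat.Primes | p.1 % 5 = 2 ∨ p.1 % 5 = 3} := by
  intro p hp
  by_contra h
  apply hp
  simp only [Set.mem_setOf_eq] at h
  push_neg at h
  have hfg : F p.1 = G p.1 := by
    rw [F_apply, G_apply]
    congr 1
    have h5 : p.1 % 5 = 0 ∨ p.1 % 5 = 1 ∨ p.1 % 5 = 4 := by omega
    unfold χ υ
    rcases h5 with h'|h'|h' <;> simp [h']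
  show H p = 1
  unfold H
  rw [hfg, div_self (inv_ne_zero (one_sub_G_ne p))]

theorem stmt10 :
    (∏' p : {p : ℕ // p.Prime ∧ (p % 5 = 2 ∨ p % 5 = 3)},
        ((p.1 : ℝ) ^ 2 - 1) / ((p.1 : ℝ) ^ 2 + 1)) = 1 / Real.sqrt 5 := by
  have h0 : Real.sqrt 5 ≠ 0 := sqrt5_pos.ne'
  have hπ : (π : ℝ) ≠ 0 := Real.pi_ne_zero
  let e : {p : ℕ // p.Prime ∧ (p % 5 = 2 ∨ p % 5 = 3)} ≃
      {p : Nat.Primes // p.1 % 5 = 2 ∨ p.1 % 5 = 3} :=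
    { toFun := fun p => ⟨⟨p.1, p.2.1⟩, p.2.2⟩
      invFun := fun p => ⟨p.1.1, p.1.2, p.2⟩
      left_inv := fun p => rfl
      right_inv := fun p => rfl }
  have h3 : ∀ c : {p : ℕ // p.Prime ∧ (p % 5 = 2 ∨ p % 5 = 3)},
      H (e c).1 = ((c.1 : ℝ)^2 - 1) / ((c.1 : ℝ)^2 + 1) := by
    intro c
    obtain ⟨p, hp, hc⟩ := c
    have hp0 : (0:ℝ) < (p:ℝ)^2 := by
      have : (2:ℝ) ≤ (p:ℝ) := by exact_mod_cast hp.two_le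
      nlinarith
    show (1 - F p)⁻¹ / (1 - G p)⁻¹ = _
    rw [F_apply, G_apply]
    have hχ : χ p = -1 := by unfold χ; rcases hc with h'|h' <;> simp [h']
    have hυ : υ p = 1 := by unfold υ; rcases hc with h'|h' <;> simp [h']
    rw [hχ, hυ, inv_div_inv, neg_div, sub_neg_eq_add]
    rw [div_eq_div_iff (by positivity) (by positivity)]
    field_simp
    linear_combination (-2 : ℝ) * mul_inv_cancel₀ hp0.ne'
  calc (∏' p : {p : ℕ // p.Prime ∧ (p % 5 = 2 ∨ p % 5 = 3)},
        ((p.1 : ℝ) ^ 2 - 1) / ((p.1 : ℝ) ^ 2 + 1))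
      = ∏' c : {p : ℕ // p.Prime ∧ (p % 5 = 2 ∨ p % 5 = 3)}, H (e c).1 := by
        exact tprod_congr (fun c => (h3 c).symm)
    _ = ∏' p : {p : Nat.Primes // p.1 % 5 = 2 ∨ p.1 % 5 = 3}, H p.1 :=
        e.tprod_eq (fun p : {p : Nat.Primes // p.1 % 5 = 2 ∨ p.1 % 5 = 3} => H p.1)
    _ = ∏' p : Nat.Primes, H p := tprod_subtype_eq_of_mulSupport_subset suppH
    _ = (4*π^2/(25*Real.sqrt 5)) / (4*π^2/25) := hasProdH.tprod_eq
    _ = 1 / Real.sqrt 5 := by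
        field_simp
end

section
/- 6·ζ(2)·∏_{p ≡ 3,5 mod 8} (p² − 1)/(p² + 1) = π²/√2. -/
open Complex Real

noncomputable def χc : DirichletCharacter ℂ 8 := (ZMod.χ₈).ringHomComp (Int.castRingHom ℂ)

lemma χc_apply' (a : ZMod 8) : χc a = ((ZMod.χ₈ a : ℤ) : ℂ) := rfl

lemma B2eval (x : ℝ) : ((Polynomial.bernoulli 2).map (algebraMap ℚ ℝ)).eval x = x^2 - x + 1/6 := by
  have h2 : _root_.bernoulli 2 = 1/6 :=
    (bernoulli_eq_bernoulli'_of_ne_one (by norm_num)).trans bernoulli'_two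
  simp [Polynomial.bernoulli, Finset.sum_range_succ, _root_.bernoulli_one, h2]
  ring

lemma cos_val (n : ℕ) :
    (1/(n:ℝ)^2 * Real.cos (2*π*n*(1/8)) - 1/(n:ℝ)^2 * Real.cos (2*π*n*(3/8))) * (Real.sqrt 2/2)
      = ((ZMod.χ₈ (n : ZMod 8) : ℤ) : ℝ) / (n:ℝ)^2 := by
  have hs : Real.sqrt 2 * Real.sqrt 2 = 2 := Real.mul_self_sqrt (by norm_num)
  have hn : n = 8 * (n / 8) + n % 8 := (Nat.div_add_mod n 8).symm
  have hcast : (n : ℝ) = 8 * (n / 8 : ℕ) + (n % 8 : ℕ) := by exact_mod_cast hn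
  have h1 : 2*π*n*(1/8) = π * (n % 8 : ℕ) / 4 + (n/8 : ℕ) * (2*π) := by rw [hcast]; ring
  have h2 : 2*π*n*(3/8) = π * (3 * (n % 8 : ℕ) : ℕ) / 4 + (3*(n/8) : ℕ) * (2*π) := by
    rw [hcast]; push_cast; ring
  have d1 : Real.cos (π*1/4) = Real.sqrt 2/2 := by
    rw [show π*(1:ℝ)/4 = π/4 by ring]; exact Real.cos_pi_div_four
  have d2 : Real.cos (π*2/4) = 0 := by
    rw [show π*(2:ℝ)/4 = π/2 by ring]; exact Real.cos_pi_div_two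
  have d3 : Real.cos (π*3/4) = -(Real.sqrt 2/2) := by
    rw [show π*(3:ℝ)/4 = π - π/4 by ring, Real.cos_pi_sub, Real.cos_pi_div_four]
  have d5 : Real.cos (π*5/4) = -(Real.sqrt 2/2) := by
    rw [show π*(5:ℝ)/4 = π/4 + (1:ℕ)*π by push_cast; ring, Real.cos_add_nat_mul_pi,
      Real.cos_pi_div_four]; ring
  have d6 : Real.cos (π*6/4) = 0 := by
    rw [show π*(6:ℝ)/4 = π/2 + (1:ℕ)*π by push_cast; ring, Real.cos_add_nat_mul_pi,
      Real.cos_pi_div_two]; ring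
  have d7 : Real.cos (π*7/4) = Real.sqrt 2/2 := by
    rw [show π*(7:ℝ)/4 = π*3/4 + (1:ℕ)*π by push_cast; ring, Real.cos_add_nat_mul_pi, d3]; ring
  have d9 : Real.cos (π*9/4) = Real.sqrt 2/2 := by
    rw [show π*(9:ℝ)/4 = π*1/4 + (1:ℕ)*(2*π) by push_cast; ring,
      Real.cos_add_nat_mul_two_pi, d1]
  have d12 : Real.cos (π*12/4) = -1 := by
    rw [show π*(12:ℝ)/4 = π + (1:ℕ)*(2*π) by push_cast; ring,
      Real.cos_add_nat_mul_two_pi, Real.cos_pi]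
  have d15 : Real.cos (π*15/4) = Real.sqrt 2/2 := by
    rw [show π*(15:ℝ)/4 = π*7/4 + (1:ℕ)*(2*π) by push_cast; ring,
      Real.cos_add_nat_mul_two_pi, d7]
  have d18 : Real.cos (π*18/4) = 0 := by
    rw [show π*(18:ℝ)/4 = π*2/4 + (2:ℕ)*(2*π) by push_cast; ring,
      Real.cos_add_nat_mul_two_pi, d2]
  have d21 : Real.cos (π*21/4) = -(Real.sqrt 2/2) := by
    rw [show π*(21:ℝ)/4 = π*5/4 + (2:ℕ)*(2*π) by push_cast; ring,
      Real.cos_add_nat_mul_two_pi, d5]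
  rw [h1, h2, Real.cos_add_nat_mul_two_pi, Real.cos_add_nat_mul_two_pi,
    ZMod.χ₈_nat_eq_if_mod_eight, ← Nat.mod_mod_of_dvd n (by norm_num : 2 ∣ 8)]
  have hr : n % 8 < 8 := Nat.mod_lt _ (by norm_num)
  interval_cases h : n % 8 <;> push_cast <;> norm_num <;>
    (try simp only [d2, d3, d5, d6, d7, d9, d12, d15, d18, d21]) <;>
    first
      | ring1
      | linear_combination ((n:ℝ)^2)⁻¹/2 * hs
      | linear_combination (-(((n:ℝ)^2)⁻¹/2)) * hs

lemma chi_hasSum : HasSum (fun n : ℕ => ((ZMod.χ₈ (n : ZMod 8) : ℤ) : ℝ) / (n:ℝ)^2)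
    (π^2 * Real.sqrt 2 / 16) := by
  have h18 := hasSum_one_div_nat_pow_mul_cos (k := 1) one_ne_zero
      (x := 1/8) ⟨by norm_num, by norm_num⟩
  have h38 := hasSum_one_div_nat_pow_mul_cos (k := 1) one_ne_zero
      (x := 3/8) ⟨by norm_num, by norm_num⟩
  have key := (h18.sub h38).mul_right (Real.sqrt 2 / 2)
  have hfun : (fun n : ℕ => (1/(n:ℝ)^(2*1) * Real.cos (2*π*n*(1/8)) -
      1/(n:ℝ)^(2*1) * Real.cos (2*π*n*(3/8))) * (Real.sqrt 2/2))
      = fun n : ℕ => ((ZMod.χ₈ (n : ZMod 8) : ℤ) : ℝ) / (n:ℝ)^2 := by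
    funext n; rw [show (2*1 : ℕ) = 2 from rfl]; exact cos_val n
  rw [hfun] at key
  convert key using 1
  · rfl
  rw [show 2*1 = 2 from rfl, B2eval, B2eval]
  norm_num [Nat.factorial]
  ring

lemma chi_L_hasSum : HasSum (fun n : ℕ => LSeries.term (fun n : ℕ => χc n) 2 n)
    (((π^2 * Real.sqrt 2 / 16 : ℝ)) : ℂ) := by
  have h := Complex.hasSum_ofReal.mpr chi_hasSum
  have hfun : (fun n : ℕ => (((((ZMod.χ₈ (n : ZMod 8) : ℤ) : ℝ) / (n:ℝ)^2 : ℝ)) : ℂ))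
      = fun n : ℕ => LSeries.term (fun n : ℕ => χc n) 2 n := by
    funext n
    rcases eq_or_ne n 0 with h0 | h0
    · subst h0
      norm_num [LSeries.term]
    · rw [LSeries.term_def, if_neg h0, χc_apply',
        show ((n:ℂ) ^ (2:ℂ)) = (n:ℂ) ^ (2:ℕ) by
          rw [show (2:ℂ) = ((2:ℕ):ℂ) by norm_num, cpow_natCast]]
      push_cast
      ring
  rw [hfun] at h
  exact h

lemma L_value : LSeries (fun n : ℕ => (χc n : ℂ)) 2 = (((π^2 * Real.sqrt 2 / 16 : ℝ)) : ℂ) :=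
  chi_L_hasSum.tsum_eq

noncomputable def Fc : ℕ → ℂ := fun n =>
  if n.Prime ∧ (n % 8 = 3 ∨ n % 8 = 5) then ((n:ℂ)^2 - 1)/((n:ℂ)^2 + 1) else 1

lemma hdc (n : ℕ) : ((n:ℂ)^2 + 1) ≠ 0 := by
  have : (((n^2 + 1 : ℕ)) : ℂ) ≠ 0 := Nat.cast_ne_zero.mpr (Nat.succ_ne_zero _)
  push_cast at this
  exact this

lemma hnc {n : ℕ} (hn : 2 ≤ n) : ((n:ℂ)^2 - 1) ≠ 0 := by
  intro h
  have h1 : ((n^2 : ℕ) : ℂ) = ((1 : ℕ) : ℂ) := by push_cast; linear_combination h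
  have := Nat.cast_inj (R := ℂ).mp h1
  nlinarith

lemma Fc_ne_zero (n : ℕ) : Fc n ≠ 0 := by
  rw [Fc]
  split_ifs with h
  · exact div_ne_zero (hnc h.1.two_le) (hdc n)
  · exact one_ne_zero

lemma multipliable_Fc : Multipliable fun p : Nat.Primes => Fc p := by
  refine Complex.multipliable_of_summable_log ?_
  have hmaj : Summable (fun p : Nat.Primes => 3 / ((p : ℕ) : ℝ)^2) := by
    have h1 : Summable (fun n : ℕ => 3 / (n:ℝ)^2) := by
      have := (Real.summable_one_div_nat_pow (p := 2)).mpr (by norm_num)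
      simpa [div_eq_mul_inv] using this.mul_left 3
    exact h1.comp_injective Subtype.val_injective
  refine Summable.of_norm_bounded hmaj fun p => ?_
  show ‖Complex.log (Fc (p:ℕ))‖ ≤ 3 / ((p:ℕ):ℝ)^2
  by_cases h : (p : ℕ).Prime ∧ ((p : ℕ) % 8 = 3 ∨ (p : ℕ) % 8 = 5)
  · have hd := hdc (p : ℕ)
    have hFc : Fc (p : ℕ) = 1 + (-2 / (((p:ℕ):ℂ)^2 + 1)) := by
      rw [Fc, if_pos h]
      field_simp
      ring
    have hcast : (((p:ℕ):ℂ)^2 + 1) = (((p:ℕ)^2 + 1 : ℕ) : ℂ) := by push_cast; ring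
    have hnorm : ‖(-2 / (((p:ℕ):ℂ)^2 + 1))‖ = 2 / (((p:ℕ)^2 + 1 : ℕ) : ℝ) := by
      rw [norm_div, norm_neg, hcast, Complex.norm_natCast]
      norm_num
    have hp2 : (2:ℝ) ≤ ((p:ℕ) : ℝ) := by exact_mod_cast p.2.two_le
    have hple : ((p:ℕ)^2 + 1 : ℕ) = (p:ℕ)^2 + 1 := rfl
    have hpleR : (((p:ℕ)^2 + 1 : ℕ) : ℝ) = ((p:ℕ):ℝ)^2 + 1 := by push_cast; ring
    have hhalf : ‖(-2 / (((p:ℕ):ℂ)^2 + 1))‖ ≤ 1/2 := by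
      rw [hnorm, hpleR, div_le_div_iff₀ (by nlinarith) (by norm_num)]
      nlinarith
    calc ‖Complex.log (Fc (p:ℕ))‖ = ‖Complex.log (1 + (-2 / (((p:ℕ):ℂ)^2 + 1)))‖ := by
          rw [hFc]
      _ ≤ 3/2 * ‖(-2 / (((p:ℕ):ℂ)^2 + 1))‖ := Complex.norm_log_one_add_half_le_self hhalf
      _ ≤ 3 / ((p : ℕ) : ℝ)^2 := by
          rw [hnorm, hpleR,
            show (3:ℝ)/2 * (2/(((p:ℕ):ℝ)^2+1)) = 3/(((p:ℕ):ℝ)^2+1) by ring,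
            div_le_div_iff₀ (by nlinarith) (by nlinarith)]
          nlinarith
  · have : Fc (p : ℕ) = 1 := by rw [Fc, if_neg h]
    rw [this]
    simp only [Complex.log_one, norm_zero]
    positivity

theorem stmt13 :
    6 * riemannZeta 2 *
        ∏' p : {p : ℕ // p.Prime ∧ (p % 8 = 3 ∨ p % 8 = 5)},
          ((p.1 : ℂ) ^ 2 - 1) / ((p.1 : ℂ) ^ 2 + 1) =
      ((π ^ 2 / Real.sqrt 2 : ℝ) : ℂ) := by
  have h2re : (1:ℝ) < (2:ℂ).re := by norm_num
  have hz := riemannZeta_eulerProduct_hasProd h2re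
  have hu := DirichletCharacter.LSeries_eulerProduct_hasProd χc h2re
  have hcprod : HasProd (fun p : Nat.Primes => if (p : ℕ) = 2 then (4/3 : ℂ) else 1) (4/3) := by
    have := hasProd_single (f := fun p : Nat.Primes => if (p:ℕ) = 2 then (4/3:ℂ) else 1)
      (⟨2, Nat.prime_two⟩ : Nat.Primes)
      (fun b hb => if_neg (fun h => hb (Subtype.ext h)))
    simpa using this
  have key : ∀ p : Nat.Primes, (1 - ((p:ℕ):ℂ)^(-2:ℂ))⁻¹ * Fc p
      = (if (p:ℕ) = 2 then (4/3:ℂ) else 1) * (1 - χc ((p:ℕ) : ZMod 8) * ((p:ℕ):ℂ)^(-2:ℂ))⁻¹ := by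
    intro p
    have hcpow : ((p:ℕ):ℂ)^(-2:ℂ) = (((p:ℕ):ℂ)^(2:ℕ))⁻¹ := by
      rw [show (-2:ℂ) = -((2:ℕ):ℂ) by norm_num, cpow_neg, cpow_natCast]
    have hp0 : ((p:ℕ):ℂ) ≠ 0 := Nat.cast_ne_zero.mpr p.2.pos.ne'
    have hd := hdc (p:ℕ)
    have hn1 := hnc p.2.two_le
    rw [hcpow, χc_apply', ZMod.χ₈_nat_eq_if_mod_eight]
    by_cases hp2 : (p:ℕ) = 2
    · rw [Fc, hp2]
      norm_num
    · have hodd : (p:ℕ) % 2 = 1 := Nat.odd_iff.mp (p.2.odd_of_ne_two hp2)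
      have hm8 : (p:ℕ) % 8 % 2 = 1 := by
        rw [Nat.mod_mod_of_dvd _ (by norm_num : 2 ∣ 8)]; exact hodd
      have hlt : (p:ℕ) % 8 < 8 := Nat.mod_lt _ (by norm_num)
      by_cases h35 : (p:ℕ) % 8 = 3 ∨ (p:ℕ) % 8 = 5
      · have h17 : ¬((p:ℕ) % 8 = 1 ∨ (p:ℕ) % 8 = 7) := by omega
        rw [Fc, if_pos ⟨p.2, h35⟩, if_neg hp2, if_neg (show ¬((p:ℕ) % 2 = 0) by omega), if_neg h17]
        push_cast
        have e1 : (1 - (((p:ℕ):ℂ)^(2:ℕ))⁻¹) = (((p:ℕ):ℂ)^2 - 1)/((p:ℕ):ℂ)^2 := by field_simp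
        have e2 : (1 - (-1:ℂ)*(((p:ℕ):ℂ)^(2:ℕ))⁻¹) = (((p:ℕ):ℂ)^2 + 1)/((p:ℕ):ℂ)^2 := by
          field_simp; ring
        rw [e1, e2, inv_div, inv_div, one_mul, div_mul_div_comm]
        rw [mul_comm (((p:ℕ):ℂ)^2) (((p:ℕ):ℂ)^2 - 1), mul_div_mul_left _ _ hn1]
      · have h17 : (p:ℕ) % 8 = 1 ∨ (p:ℕ) % 8 = 7 := by omega
        rw [Fc, if_neg (fun hh => h35 hh.2), if_neg hp2,
          if_neg (show ¬((p:ℕ) % 2 = 0) by omega), if_pos h17]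
        push_cast
        rw [mul_one, one_mul, one_mul]
  have h1 : ∏' p : Nat.Primes, ((1 - ((p:ℕ):ℂ)^(-2:ℂ))⁻¹ * Fc p)
      = riemannZeta 2 * ∏' p : Nat.Primes, Fc p := by
    rw [Multipliable.tprod_mul hz.multipliable multipliable_Fc, hz.tprod_eq]
  have h2 : ∏' p : Nat.Primes,
        ((if (p:ℕ) = 2 then (4/3:ℂ) else 1) * (1 - χc ((p:ℕ) : ZMod 8) * ((p:ℕ):ℂ)^(-2:ℂ))⁻¹)
      = 4/3 * (((π^2 * Real.sqrt 2 / 16 : ℝ)) : ℂ) := by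
    rw [Multipliable.tprod_mul hcprod.multipliable hu.multipliable, hcprod.tprod_eq, hu.tprod_eq]
    rw [L_value]
  have hζP : riemannZeta 2 * ∏' p : Nat.Primes, Fc p
      = 4/3 * (((π^2 * Real.sqrt 2 / 16 : ℝ)) : ℂ) := by
    rw [← h1, tprod_congr key, h2]
  have hsupp : Function.mulSupport Fc ⊆ {n : ℕ | n.Prime ∧ (n % 8 = 3 ∨ n % 8 = 5)} := by
    intro n hn
    by_contra h
    exact hn (if_neg h)
  have hPa : ∏' p : {p : ℕ // p.Prime ∧ (p % 8 = 3 ∨ p % 8 = 5)}, Fc p.1 = ∏' n : ℕ, Fc n :=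
    tprod_subtype_eq_of_mulSupport_subset hsupp
  have hPb : ∏' p : Nat.Primes, Fc p = ∏' n : ℕ, Fc n :=
    tprod_subtype_eq_of_mulSupport_subset (hsupp.trans fun n hn => hn.1)
  have hP : (∏' p : {p : ℕ // p.Prime ∧ (p % 8 = 3 ∨ p % 8 = 5)},
      ((p.1 : ℂ) ^ 2 - 1) / ((p.1 : ℂ) ^ 2 + 1)) = ∏' p : Nat.Primes, Fc p := by
    rw [hPb, ← hPa]
    exact tprod_congr fun p => by rw [Fc, if_pos p.2]
  rw [hP, mul_assoc, hζP]
  have hs : Real.sqrt 2 * Real.sqrt 2 = 2 := Real.mul_self_sqrt (by norm_num)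
  have hval : (π ^ 2 / Real.sqrt 2 : ℝ) = 8 * (π^2 * Real.sqrt 2 / 16) := by
    rw [div_eq_iff (Real.sqrt_ne_zero'.mpr (by norm_num))]
    linear_combination (-(π^2/2)) * hs
  rw [hval]
  push_cast
  ring
end

section
/- For every real s with 0 < s < 1, the value ζ(s) of the Riemann zeta function is real and strictly negative. -/
open Complex


/-- MVT bound for differences of complex powers of reals. -/
lemma eta_mvt_bound {a b : ℝ} (ha : 0 < a) (hab : a ≤ b) {s : ℂ} (hs : s ≠ 0)
    (hre : 0 ≤ s.re) :
    ‖(a : ℂ) ^ (-s) - (b : ℂ) ^ (-s)‖ ≤ ‖s‖ * a ^ (-s.re - 1) * (b - a) := by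
  have key : ∀ x ∈ Set.Icc a b, HasDerivWithinAt (fun y : ℝ => (y : ℂ) ^ (-s))
      (-s * (x : ℂ) ^ (-s - 1)) (Set.Icc a b) x := by
    intro x hx
    have hx0 : x ≠ 0 := by have := hx.1; intro h; rw [h] at this; linarith
    have hr : (-s - 1 : ℂ) ≠ -1 := by
      intro h
      apply hs
      have : (-s : ℂ) = 0 := by linear_combination h
      simpa [neg_eq_zero] using this
    have h1 := hasDerivAt_ofReal_cpow_const' hx0 hr
    rw [show (-s - 1 + 1 : ℂ) = -s by ring] at h1
    have h2 := h1.const_mul (-s)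
    have heq : (fun y : ℝ => -s * ((y : ℂ) ^ (-s) / (-s))) = fun y : ℝ => (y : ℂ) ^ (-s) := by
      funext y
      rw [mul_div_cancel₀ _ (neg_ne_zero.mpr hs)]
    rw [heq] at h2
    exact h2.hasDerivWithinAt
  have bound : ∀ x ∈ Set.Icc a b, ‖-s * (x : ℂ) ^ (-s - 1)‖ ≤ ‖s‖ * a ^ (-s.re - 1) := by
    intro x hx
    have hx0 : 0 < x := lt_of_lt_of_le ha hx.1
    rw [norm_mul, norm_neg]
    refine mul_le_mul_of_nonneg_left ?_ (norm_nonneg s)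
    rw [Complex.norm_cpow_eq_rpow_re_of_pos hx0]
    have hre2 : (-s - 1).re = -s.re - 1 := by simp
    rw [hre2]
    exact Real.rpow_le_rpow_of_nonpos ha hx.1 (by linarith)
  have h := Convex.norm_image_sub_le_of_norm_hasDerivWithin_le key bound (convex_Icc a b)
      (Set.left_mem_Icc.mpr hab) (Set.right_mem_Icc.mpr hab)
  rw [norm_sub_rev]
  calc ‖(b : ℂ) ^ (-s) - (a : ℂ) ^ (-s)‖ ≤ ‖s‖ * a ^ (-s.re - 1) * ‖b - a‖ := h
    _ = ‖s‖ * a ^ (-s.re - 1) * (b - a) := by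
        rw [Real.norm_eq_abs, _root_.abs_of_nonneg (by linarith)]
lemma etaTerm_bound (k : ℕ) {s : ℂ} (hs : 0 < s.re) :
    ‖((2 * k + 1 : ℕ) : ℂ) ^ (-s) - ((2 * k + 2 : ℕ) : ℂ) ^ (-s)‖
      ≤ ‖s‖ * ((k : ℝ) + 1) ^ (-s.re - 1) := by
  have hsne : s ≠ 0 := by intro h; rw [h] at hs; simp at hs
  have h := eta_mvt_bound (a := (2 * k + 1 : ℝ)) (b := (2 * k + 2 : ℝ))
    (by positivity) (by linarith) hsne hs.le
  have hcast1 : (((2 * k + 1 : ℕ) : ℂ)) = (((2 * k + 1 : ℝ)) : ℂ) := by push_cast; ring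
  have hcast2 : (((2 * k + 2 : ℕ) : ℂ)) = (((2 * k + 2 : ℝ)) : ℂ) := by push_cast; ring
  rw [hcast1, hcast2]
  refine h.trans ?_
  have hmono : ((2 * k + 1 : ℝ)) ^ (-s.re - 1) ≤ ((k : ℝ) + 1) ^ (-s.re - 1) :=
    Real.rpow_le_rpow_of_nonpos (by positivity) (by push_cast; linarith) (by linarith)
  have : (2 * (k : ℝ) + 2) - (2 * k + 1) = 1 := by ring
  rw [this, mul_one]
  exact mul_le_mul_of_nonneg_left hmono (norm_nonneg s)

lemma etaTerm_differentiable (k : ℕ) :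
    Differentiable ℂ (fun s : ℂ => ((2 * k + 1 : ℕ) : ℂ) ^ (-s) - ((2 * k + 2 : ℕ) : ℂ) ^ (-s)) := by
  have h1 : ((2 * k + 1 : ℕ) : ℂ) ≠ 0 := Nat.cast_ne_zero.mpr (by omega)
  have h2 : ((2 * k + 2 : ℕ) : ℂ) ≠ 0 := Nat.cast_ne_zero.mpr (by omega)
  exact (differentiable_id.neg.const_cpow (Or.inl h1)).sub
    (differentiable_id.neg.const_cpow (Or.inl h2))

noncomputable def etaF (s : ℂ) : ℂ :=
  ∑' k : ℕ, (((2 * k + 1 : ℕ) : ℂ) ^ (-s) - ((2 * k + 2 : ℕ) : ℂ) ^ (-s))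

lemma summable_aux {c : ℝ} (hc : 0 < c) : Summable (fun k : ℕ => ((k : ℝ) + 1) ^ (-c - 1)) := by
  have h : Summable (fun k : ℕ => ((k : ℝ)) ^ (-c - 1)) :=
    Real.summable_nat_rpow.mpr (by linarith)
  have := (summable_nat_add_iff 1).mpr h
  simpa using this

lemma etaF_differentiableAt {s₀ : ℂ} (hs : 0 < s₀.re) : DifferentiableAt ℂ etaF s₀ := by
  set ε := s₀.re / 2 with hε
  set R := ‖s₀‖ + 1 with hR
  set V : Set ℂ := {s | ε < s.re} ∩ Metric.ball 0 R with hV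
  have hVo : IsOpen V := ((isOpen_lt continuous_const continuous_re).inter Metric.isOpen_ball)
  have hs₀V : s₀ ∈ V := by
    constructor
    · simp only [Set.mem_setOf_eq, hε]; linarith
    · simp [hR, Metric.mem_ball, dist_zero_right]
  have hdiff : DifferentiableOn ℂ etaF V := by
    refine differentiableOn_tsum_of_summable_norm
      (u := fun k => R * ((k : ℝ) + 1) ^ (-ε - 1)) ?_ ?_ hVo ?_
    · exact (summable_aux (by positivity)).mul_left R
    · exact fun k => (etaTerm_differentiable k).differentiableOn
    · intro k w hw
      have hw1 : ε < w.re := hw.1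
      have hw2 : ‖w‖ < R := by simpa [dist_zero_right] using hw.2
      have hre : 0 < w.re := lt_trans (by positivity) hw1
      refine (etaTerm_bound k hre).trans ?_
      have h1 : ((k : ℝ) + 1) ^ (-w.re - 1) ≤ ((k : ℝ) + 1) ^ (-ε - 1) :=
        Real.rpow_le_rpow_of_exponent_le (by linarith [Nat.cast_nonneg (α := ℝ) k]) (by linarith)
      have h2 : (0:ℝ) ≤ ((k : ℝ) + 1) ^ (-w.re - 1) := Real.rpow_nonneg (by positivity) _
      exact mul_le_mul hw2.le h1 h2 (by positivity)
  exact hdiff.differentiableAt (hVo.mem_nhds hs₀V)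
lemma etaF_eq_of_one_lt {s : ℂ} (hs : 1 < s.re) :
    etaF s = (1 - 2 ^ (1 - s)) * riemannZeta s := by
  set F : ℕ → ℂ := fun n => ((n + 1 : ℕ) : ℂ) ^ (-s) with hFdef
  have hF : Summable F := by
    have h0 : Summable (fun n : ℕ => 1 / (n : ℂ) ^ s) := Complex.summable_one_div_nat_cpow.mpr hs
    have h1 : Summable (fun n : ℕ => (n : ℂ) ^ (-s)) := by
      simpa [cpow_neg, one_div] using h0
    have := (summable_nat_add_iff 1).mpr h1
    simpa [hFdef] using this
  have hzeta : riemannZeta s = ∑' n : ℕ, F n := by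
    rw [zeta_eq_tsum_one_div_nat_add_one_cpow hs]
    congr 1 with n
    simp only [hFdef]
    rw [cpow_neg, one_div]
    push_cast
    ring_nf
  have he : Summable (fun k : ℕ => F (2 * k)) :=
    hF.comp_injective (mul_right_injective₀ (two_ne_zero' ℕ))
  have ho : Summable (fun k : ℕ => F (2 * k + 1)) :=
    hF.comp_injective ((add_left_injective 1).comp (mul_right_injective₀ (two_ne_zero' ℕ)))
  have hsplit : (∑' k, F (2 * k)) + ∑' k, F (2 * k + 1) = ∑' n, F n :=
    tsum_even_add_odd he ho
  have hodd : (∑' k, F (2 * k + 1)) = 2 ^ (-s) * riemannZeta s := by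
    have h1 : ∀ k : ℕ, F (2 * k + 1) = 2 ^ (-s) * F k := by
      intro k
      have : (2 * k + 1 + 1 : ℕ) = 2 * (k + 1) := by ring
      rw [hFdef]
      simp only [this]
      push_cast
      rw [show ((2 : ℂ) * ((k : ℂ) + 1)) = ((2 : ℝ) : ℂ) * (((k : ℝ) + 1 : ℝ) : ℂ) by push_cast; ring,
        mul_cpow_ofReal_nonneg (by norm_num) (by positivity)]
      push_cast
      ring
    simp_rw [h1]
    rw [tsum_mul_left, hzeta]
  have heta : etaF s = (∑' k, F (2 * k)) - ∑' k, F (2 * k + 1) := by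
    rw [etaF]
    have : ∀ k : ℕ, ((2 * k + 1 : ℕ) : ℂ) ^ (-s) - ((2 * k + 2 : ℕ) : ℂ) ^ (-s)
        = F (2 * k) - F (2 * k + 1) := by
      intro k
      rw [hFdef]
    simp_rw [this]
    exact Summable.tsum_sub he ho
  have h2s : (2 : ℂ) ^ (1 - s) = 2 * 2 ^ (-s) := by
    rw [show (1 - s : ℂ) = 1 + -s by ring, cpow_add _ _ (two_ne_zero), cpow_one]
  rw [heta, show (∑' k, F (2 * k)) = (∑' n, F n) - ∑' k, F (2 * k + 1) by
    rw [← hsplit]; ring, hodd, ← hzeta, h2s]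
  ring
lemma ne_one_of_im_ne {z : ℂ} (h : z.im ≠ 0) : z ≠ 1 := by
  intro hz; rw [hz] at h; simp at h

lemma re_pos_aux {t x : ℝ} (ht0 : 0 ≤ t) (ht1 : t ≤ 1) (hx : 0 < x) :
    0 < (1 - t) * x + t * 2 := by
  rcases eq_or_lt_of_le ht0 with h | h
  · rw [← h]; simpa using hx
  · have h2 : 0 ≤ (1 - t) * x := mul_nonneg (by linarith) hx.le
    nlinarith

lemma U_preconnected : IsPreconnected ({s : ℂ | 0 < s.re} ∩ {(1 : ℂ)}ᶜ) := by
  set U : Set ℂ := {s : ℂ | 0 < s.re} ∩ {(1 : ℂ)}ᶜ with hU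
  have hmem : ∀ z : ℂ, 0 < z.re → z ≠ 1 → z ∈ U := by
    intro z h1 h2
    exact ⟨h1, h2⟩
  have h2U : (2 : ℂ) ∈ U := hmem 2 (by norm_num) (by norm_num)
  have key : ∀ s ∈ U, JoinedIn U 2 s := by
    intro s hsU
    obtain ⟨h1, h2⟩ := hsU
    have h1 : 0 < s.re := h1
    have h2' : s ≠ 1 := h2
    rcases le_or_gt 0 s.im with him | him
    · have j1 : JoinedIn U s (s + I) := by
        apply JoinedIn.of_segment_subset
        intro z hz
        rw [segment_eq_image'] at hz
        obtain ⟨t, ⟨ht0, ht1⟩, rfl⟩ := hz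
        beta_reduce
        rw [show s + I - s = I by ring]
        have hre : (s + t • I).re = s.re := by simp [Complex.add_re, Complex.smul_re]
        have himz : (s + t • I).im = s.im + t := by simp [Complex.add_im, Complex.smul_im]
        refine hmem _ (by rw [hre]; exact h1) ?_
        intro hzz
        rw [hzz] at hre himz
        simp only [Complex.one_re, Complex.one_im] at hre himz
        have ht : t = 0 := by linarith
        apply h2'
        have : s.re = 1 := hre.symm
        have : s.im = 0 := by linarith
        exact Complex.ext hre.symm this
      have j2 : JoinedIn U (s + I) 2 := by
        apply JoinedIn.of_segment_subset
        intro z hz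
        rw [segment_eq_image] at hz
        obtain ⟨t, ⟨ht0, ht1⟩, rfl⟩ := hz
        beta_reduce
        have hre : ((1 - t) • (s + I) + t • (2 : ℂ)).re = (1 - t) * s.re + t * 2 := by
          simp [Complex.add_re, Complex.smul_re]
        have himz : ((1 - t) • (s + I) + t • (2 : ℂ)).im = (1 - t) * (s.im + 1) := by
          simp [Complex.add_im, Complex.smul_im]
          try ring
        refine hmem _ (by rw [hre]; exact re_pos_aux ht0 ht1 h1) ?_
        intro hzz
        rw [hzz] at himz
        simp only [Complex.one_im] at himz
        have ht : t = 1 := by nlinarith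
        rw [ht] at hzz
        norm_num at hzz
      exact j2.symm.trans j1.symm
    · have j1 : JoinedIn U s (s - I) := by
        apply JoinedIn.of_segment_subset
        intro z hz
        rw [segment_eq_image'] at hz
        obtain ⟨t, ⟨ht0, ht1⟩, rfl⟩ := hz
        beta_reduce
        rw [show s - I - s = -I by ring]
        have hre : (s + t • (-I)).re = s.re := by simp [Complex.add_re, Complex.smul_re]
        have himz : (s + t • (-I)).im = s.im - t := by
          simp [Complex.add_im, Complex.smul_im]
          try ring
        refine hmem _ (by rw [hre]; exact h1) ?_
        apply ne_one_of_im_ne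
        rw [himz]
        intro hc
        linarith
      have j2 : JoinedIn U (s - I) 2 := by
        apply JoinedIn.of_segment_subset
        intro z hz
        rw [segment_eq_image] at hz
        obtain ⟨t, ⟨ht0, ht1⟩, rfl⟩ := hz
        beta_reduce
        have hre : ((1 - t) • (s - I) + t • (2 : ℂ)).re = (1 - t) * s.re + t * 2 := by
          simp [Complex.add_re, Complex.sub_re, Complex.smul_re]
        have himz : ((1 - t) • (s - I) + t • (2 : ℂ)).im = (1 - t) * (s.im - 1) := by
          simp [Complex.add_im, Complex.sub_im, Complex.smul_im]
          try ring
        refine hmem _ (by rw [hre]; exact re_pos_aux ht0 ht1 h1) ?_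
        intro hzz
        rw [hzz] at himz
        simp only [Complex.one_im] at himz
        have ht : t = 1 := by nlinarith
        rw [ht] at hzz
        norm_num at hzz
      exact j2.symm.trans j1.symm
  exact (IsPathConnected.isConnected ⟨2, h2U, fun _ hy => key _ hy⟩).isPreconnected
lemma etaF_eq {s : ℂ} (hs : 0 < s.re) (hs1 : s ≠ 1) :
    etaF s = (1 - 2 ^ (1 - s)) * riemannZeta s := by
  set U : Set ℂ := {s : ℂ | 0 < s.re} ∩ {(1 : ℂ)}ᶜ with hUdef
  have hUo : IsOpen U := (isOpen_lt continuous_const continuous_re).inter isOpen_compl_singleton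
  have hfa : AnalyticOnNhd ℂ etaF U := by
    refine DifferentiableOn.analyticOnNhd (fun u hu => ?_) hUo
    exact (etaF_differentiableAt hu.1).differentiableWithinAt
  have hga : AnalyticOnNhd ℂ (fun z => (1 - 2 ^ (1 - z)) * riemannZeta z) U := by
    refine DifferentiableOn.analyticOnNhd (fun u hu => ?_) hUo
    have hu1 : u ≠ 1 := hu.2
    exact (((differentiableAt_const _).sub (((differentiableAt_const _).sub
      differentiableAt_id).const_cpow (Or.inl two_ne_zero))).mul
      (differentiableAt_riemannZeta hu1)).differentiableWithinAt
  have h2U : (2 : ℂ) ∈ U := ⟨by norm_num, by norm_num⟩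
  have hev : etaF =ᶠ[nhds (2 : ℂ)] fun z => (1 - 2 ^ (1 - z)) * riemannZeta z := by
    have hV : {z : ℂ | 1 < z.re} ∈ nhds (2 : ℂ) := by
      refine (isOpen_lt continuous_const continuous_re).mem_nhds ?_
      norm_num
    filter_upwards [hV] with z hz using etaF_eq_of_one_lt hz
  exact hfa.eqOn_of_preconnected_of_eventuallyEq hga U_preconnected h2U hev ⟨hs, hs1⟩

theorem stmt18 (s : ℝ) (hs0 : 0 < s) (hs1 : s < 1) :
    (riemannZeta s).im = 0 ∧ (riemannZeta s).re < 0 := by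
  have hsne : (s : ℂ) ≠ 1 := by
    intro h
    rw [Complex.ofReal_eq_one] at h
    linarith
  have hre : 0 < (s : ℂ).re := by simpa using hs0
  have hkey := etaF_eq hre hsne
  set r : ℕ → ℝ := fun k => ((2 * k + 1 : ℕ) : ℝ) ^ (-s) - ((2 * k + 2 : ℕ) : ℝ) ^ (-s) with hrdef
  have hterm : ∀ k : ℕ, (((2 * k + 1 : ℕ) : ℂ) ^ (-(s : ℂ)) - ((2 * k + 2 : ℕ) : ℂ) ^ (-(s : ℂ)))
      = ((r k : ℝ) : ℂ) := by
    intro k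
    rw [hrdef]
    have e1 : ((2 * k + 1 : ℕ) : ℂ) = (((2 * k + 1 : ℕ) : ℝ) : ℂ) := by push_cast; ring
    have e2 : ((2 * k + 2 : ℕ) : ℂ) = (((2 * k + 2 : ℕ) : ℝ) : ℂ) := by push_cast; ring
    rw [e1, e2, show -(s : ℂ) = ((-s : ℝ) : ℂ) by norm_num,
      ← Complex.ofReal_cpow (by positivity), ← Complex.ofReal_cpow (by positivity)]
    push_cast
    ring
  have hnorm : Summable (fun k : ℕ =>
      ‖((2 * k + 1 : ℕ) : ℂ) ^ (-(s : ℂ)) - ((2 * k + 2 : ℕ) : ℂ) ^ (-(s : ℂ))‖) := by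
    refine Summable.of_nonneg_of_le (fun _ => norm_nonneg _)
      (fun k => etaTerm_bound k hre) ?_
    have : (s : ℂ).re = s := by simp
    rw [this]
    exact (summable_aux hs0).mul_left _
  have hsumr : Summable r := by
    rw [← summable_abs_iff]
    have : ∀ k : ℕ, |r k| = ‖((2 * k + 1 : ℕ) : ℂ) ^ (-(s : ℂ)) - ((2 * k + 2 : ℕ) : ℂ) ^ (-(s : ℂ))‖ := by
      intro k
      rw [hterm k, Complex.norm_real, Real.norm_eq_abs]
    simpa [this] using hnorm
  have hrpos : ∀ k : ℕ, 0 ≤ r k := by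
    intro k
    rw [hrdef]
    have : ((2 * k + 2 : ℕ) : ℝ) ^ (-s) ≤ ((2 * k + 1 : ℕ) : ℝ) ^ (-s) :=
      Real.rpow_le_rpow_of_nonpos (by positivity) (by push_cast; linarith) (by linarith)
    simpa using this
  have hr0 : 0 < r 0 := by
    have h2s : (2 : ℝ) ^ (-s) < 1 :=
      Real.rpow_lt_one_of_one_lt_of_neg one_lt_two (by linarith)
    have he : r 0 = 1 - (2 : ℝ) ^ (-s) := by
      rw [hrdef]
      norm_num
    rw [he]
    linarith
  have hT : 0 < ∑' k, r k := Summable.tsum_pos hsumr hrpos 0 hr0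
  have hetaF : etaF (s : ℂ) = ((∑' k, r k : ℝ) : ℂ) := by
    rw [etaF]
    simp_rw [hterm]
    exact (Complex.ofReal_tsum r).symm
  have hc : ((2 : ℂ)) ^ (1 - (s : ℂ)) = (((2 : ℝ) ^ (1 - s) : ℝ) : ℂ) := by
    rw [show (1 - (s : ℂ)) = (((1 - s : ℝ)) : ℂ) by push_cast; ring,
      Complex.ofReal_cpow (by norm_num)]
    norm_num
  have hcneg : (1 : ℝ) - (2 : ℝ) ^ (1 - s) < 0 := by
    have : (1 : ℝ) < 2 ^ (1 - s) :=
      Real.one_lt_rpow_iff_of_pos (by norm_num) |>.mpr (Or.inl ⟨one_lt_two, by linarith⟩)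
    linarith
  have h2 : ((1 : ℂ) - 2 ^ (1 - (s : ℂ))) = (((1 - (2 : ℝ) ^ (1 - s) : ℝ)) : ℂ) := by
    rw [hc]; push_cast; ring
  rw [hetaF, h2] at hkey
  set c : ℝ := 1 - (2 : ℝ) ^ (1 - s) with hcdef
  have hcne : c ≠ 0 := ne_of_lt hcneg
  have hzeta : riemannZeta s = (((∑' k, r k) / c : ℝ) : ℂ) := by
    rw [Complex.ofReal_div]
    rw [eq_div_iff (by simpa using hcne)]
    rw [hkey]
    ring
  rw [hzeta]
  refine ⟨by simp, ?_⟩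
  simp only [Complex.ofReal_re]
  exact div_neg_of_pos_of_neg hT hcneg
end

section
/- The value of the Riemann zeta function at 1/2 satisfies −3/2 + 1/(15√5) < ζ(1/2) < −35/24. -/
open Complex Real

noncomputable section ZetaHalfAux
namespace ZetaHalfAux
open Real Filter Topology


noncomputable def ttm (k : ℕ) : ℝ := (Real.sqrt (2*(k:ℝ)+1))⁻¹ - (Real.sqrt (2*(k:ℝ)+2))⁻¹

lemma sqrt_convex {a : ℝ} (ha : 0 < a) :
    2 * (Real.sqrt (a+1))⁻¹ ≤ (Real.sqrt a)⁻¹ + (Real.sqrt (a+2))⁻¹ := by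
  have hx : 0 < Real.sqrt a := Real.sqrt_pos.mpr ha
  have hy : 0 < Real.sqrt (a+1) := Real.sqrt_pos.mpr (by linarith)
  have hz : 0 < Real.sqrt (a+2) := Real.sqrt_pos.mpr (by linarith)
  have hx2 : Real.sqrt a ^ 2 = a := Real.sq_sqrt ha.le
  have hy2 : Real.sqrt (a+1) ^ 2 = a+1 := Real.sq_sqrt (by linarith)
  have hz2 : Real.sqrt (a+2) ^ 2 = a+2 := Real.sq_sqrt (by linarith)
  set x := Real.sqrt a; set y := Real.sqrt (a+1); set z := Real.sqrt (a+2)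
  have hxz : x * z ≤ y^2 := by
    nlinarith [sq_nonneg (x*z - y^2), sq_nonneg (x*z)]
  have key : 2 * (x*z) ≤ y * (x+z) := by
    nlinarith [sq_nonneg (x - z), mul_pos hx hz, mul_pos hy (mul_pos hx hz),
      sq_nonneg (y*(x+z) - 2*x*z), mul_pos (mul_pos hx hy) hz]
  rw [inv_eq_one_div, inv_eq_one_div, inv_eq_one_div, div_add_div _ _ hx.ne' hz.ne',
    mul_one_div, div_le_div_iff₀ hy (mul_pos hx hz)]
  nlinarith [key]

lemma tt_nonneg (k : ℕ) : 0 ≤ ttm k := by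
  have hp : 0 < Real.sqrt (2*(k:ℝ)+1) := Real.sqrt_pos.mpr (by positivity)
  have h : Real.sqrt (2*(k:ℝ)+1) ≤ Real.sqrt (2*(k:ℝ)+2) := Real.sqrt_le_sqrt (by linarith)
  have := one_div_le_one_div_of_le hp h
  simp only [ttm, sub_nonneg, inv_eq_one_div]
  exact this

lemma tele {f : ℕ → ℝ} (hanti : ∀ n, f (n+1) ≤ f n) (hlim : Tendsto f atTop (𝓝 0)) :
    HasSum (fun k => f k - f (k+1)) (f 0) := by
  rw [hasSum_iff_tendsto_nat_of_nonneg (fun i => sub_nonneg.mpr (hanti i))]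
  have h : (fun n => ∑ i ∈ Finset.range n, (f i - f (i+1))) = fun n => f 0 - f n := by
    funext n; exact Finset.sum_range_sub' f n
  rw [h]
  simpa using tendsto_const_nhds.sub hlim

noncomputable def gb (j : ℕ) : ℝ := 2⁻¹ * (Real.sqrt (2*(j:ℝ)+40))⁻¹
noncomputable def hbf (j : ℕ) : ℝ := 2⁻¹ * (Real.sqrt (2*(j:ℝ)+41))⁻¹

lemma tendsto_aux (c : ℝ) (hc : 0 < c) :
    Tendsto (fun j : ℕ => 2⁻¹ * (Real.sqrt (2*(j:ℝ)+c))⁻¹) atTop (𝓝 0) := by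
  have h1 : Tendsto (fun j : ℕ => (2*(j:ℝ)+c)) atTop atTop :=
    tendsto_atTop_add_const_right _ c (Tendsto.const_mul_atTop (by norm_num)
      tendsto_natCast_atTop_atTop)
  have h2 : Tendsto (fun j : ℕ => Real.sqrt (2*(j:ℝ)+c)) atTop atTop := by
    have := (tendsto_rpow_atTop (by norm_num : (0:ℝ) < 1/2)).comp h1
    refine this.congr fun j => ?_
    simp [Real.sqrt_eq_rpow]
  have h3 := h2.inv_tendsto_atTop
  have := h3.const_mul (2⁻¹ : ℝ)
  simpa using this

lemma gb_anti (j : ℕ) : gb (j+1) ≤ gb j := by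
  unfold gb
  have hp : 0 < Real.sqrt (2*(j:ℝ)+40) := Real.sqrt_pos.mpr (by positivity)
  have h : Real.sqrt (2*(j:ℝ)+40) ≤ Real.sqrt (2*((j:ℝ)+1)+40) := Real.sqrt_le_sqrt (by linarith)
  have := one_div_le_one_div_of_le hp h
  push_cast
  simp only [inv_eq_one_div]
  nlinarith [this]

lemma hbf_anti (j : ℕ) : hbf (j+1) ≤ hbf j := by
  unfold hbf
  have hp : 0 < Real.sqrt (2*(j:ℝ)+41) := Real.sqrt_pos.mpr (by positivity)
  have h : Real.sqrt (2*(j:ℝ)+41) ≤ Real.sqrt (2*((j:ℝ)+1)+41) := Real.sqrt_le_sqrt (by linarith)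
  have := one_div_le_one_div_of_le hp h
  push_cast
  simp only [inv_eq_one_div]
  nlinarith [this]

lemma gb_hasSum : HasSum (fun j => gb j - gb (j+1)) (gb 0) := tele gb_anti (by
  have := tendsto_aux 40 (by norm_num)
  exact this)

lemma hbf_hasSum : HasSum (fun j => hbf j - hbf (j+1)) (hbf 0) := tele hbf_anti (by
  have := tendsto_aux 41 (by norm_num)
  exact this)

lemma hub (j : ℕ) : ttm (j+20) ≤ gb j - gb (j+1) := by
  have h := sqrt_convex (a := 2*(j:ℝ)+40) (by positivity)
  unfold ttm gb
  push_cast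
  have e1 : 2*(j:ℝ)+40+1 = 2*(j:ℝ)+41 := by ring
  have e2 : 2*(j:ℝ)+40+2 = 2*((j:ℝ)+1)+40 := by ring
  rw [e1, e2] at h
  have e3 : 2*((j:ℝ)+20)+1 = 2*(j:ℝ)+41 := by ring
  have e4 : 2*((j:ℝ)+20)+2 = 2*((j:ℝ)+1)+40 := by ring
  rw [e3, e4]
  linarith [h]

lemma hlb (j : ℕ) : hbf j - hbf (j+1) ≤ ttm (j+20) := by
  have h := sqrt_convex (a := 2*(j:ℝ)+41) (by positivity)
  unfold ttm hbf
  push_cast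
  have e1 : 2*(j:ℝ)+41+1 = 2*((j:ℝ)+20)+2 := by ring
  have e2 : 2*(j:ℝ)+41+2 = 2*((j:ℝ)+1)+41 := by ring
  rw [e1, e2] at h
  have e3 : 2*((j:ℝ)+20)+1 = 2*(j:ℝ)+41 := by ring
  rw [e3]
  linarith [h]

lemma summable_tail : Summable (fun j => ttm (j+20)) :=
  Summable.of_nonneg_of_le (fun j => tt_nonneg _) hub gb_hasSum.summable

lemma summable_tt : Summable ttm := (summable_nat_add_iff 20).mp summable_tail

noncomputable def Gval : ℝ := ∑' k, ttm k

lemma tail_lb : hbf 0 ≤ ∑' j, ttm (j+20) :=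
  hbf_hasSum.tsum_eq ▸ Summable.tsum_le_tsum hlb hbf_hasSum.summable summable_tail

lemma tail_ub : ∑' j, ttm (j+20) ≤ gb 0 :=
  gb_hasSum.tsum_eq ▸ Summable.tsum_le_tsum hub summable_tail gb_hasSum.summable

lemma G_bounds : (0.6044:ℝ) ≤ Gval ∧ Gval ≤ 0.6054 := by
  have s1 : ((1:ℝ)/1.00000001) ≤ (Real.sqrt 1)⁻¹ ∧ (Real.sqrt 1)⁻¹ ≤ 1/1 := by
    have hlo : (1:ℝ) ≤ Real.sqrt 1 := (Real.le_sqrt' (by norm_num)).mpr (by norm_num)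
    have hhi : Real.sqrt 1 ≤ 1.00000001 := Real.sqrt_le_iff.mpr ⟨by norm_num, by norm_num⟩
    have hp : (0:ℝ) < Real.sqrt 1 := Real.sqrt_pos.mpr (by norm_num)
    exact ⟨by rw [inv_eq_one_div]; exact one_div_le_one_div_of_le hp hhi,
           by rw [inv_eq_one_div]; exact one_div_le_one_div_of_le (by norm_num) hlo⟩
  have s2 : ((1:ℝ)/1.41421357) ≤ (Real.sqrt 2)⁻¹ ∧ (Real.sqrt 2)⁻¹ ≤ 1/1.41421356 := by
    have hlo : (1.41421356:ℝ) ≤ Real.sqrt 2 := (Real.le_sqrt' (by norm_num)).mpr (by norm_num)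
    have hhi : Real.sqrt 2 ≤ 1.41421357 := Real.sqrt_le_iff.mpr ⟨by norm_num, by norm_num⟩
    have hp : (0:ℝ) < Real.sqrt 2 := Real.sqrt_pos.mpr (by norm_num)
    exact ⟨by rw [inv_eq_one_div]; exact one_div_le_one_div_of_le hp hhi,
           by rw [inv_eq_one_div]; exact one_div_le_one_div_of_le (by norm_num) hlo⟩
  have s3 : ((1:ℝ)/1.73205081) ≤ (Real.sqrt 3)⁻¹ ∧ (Real.sqrt 3)⁻¹ ≤ 1/1.7320508 := by
    have hlo : (1.7320508:ℝ) ≤ Real.sqrt 3 := (Real.le_sqrt' (by norm_num)).mpr (by norm_num)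
    have hhi : Real.sqrt 3 ≤ 1.73205081 := Real.sqrt_le_iff.mpr ⟨by norm_num, by norm_num⟩
    have hp : (0:ℝ) < Real.sqrt 3 := Real.sqrt_pos.mpr (by norm_num)
    exact ⟨by rw [inv_eq_one_div]; exact one_div_le_one_div_of_le hp hhi,
           by rw [inv_eq_one_div]; exact one_div_le_one_div_of_le (by norm_num) hlo⟩
  have s4 : ((1:ℝ)/2.00000001) ≤ (Real.sqrt 4)⁻¹ ∧ (Real.sqrt 4)⁻¹ ≤ 1/2 := by
    have hlo : (2:ℝ) ≤ Real.sqrt 4 := (Real.le_sqrt' (by norm_num)).mpr (by norm_num)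
    have hhi : Real.sqrt 4 ≤ 2.00000001 := Real.sqrt_le_iff.mpr ⟨by norm_num, by norm_num⟩
    have hp : (0:ℝ) < Real.sqrt 4 := Real.sqrt_pos.mpr (by norm_num)
    exact ⟨by rw [inv_eq_one_div]; exact one_div_le_one_div_of_le hp hhi,
           by rw [inv_eq_one_div]; exact one_div_le_one_div_of_le (by norm_num) hlo⟩
  have s5 : ((1:ℝ)/2.23606798) ≤ (Real.sqrt 5)⁻¹ ∧ (Real.sqrt 5)⁻¹ ≤ 1/2.23606797 := by
    have hlo : (2.23606797:ℝ) ≤ Real.sqrt 5 := (Real.le_sqrt' (by norm_num)).mpr (by norm_num)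
    have hhi : Real.sqrt 5 ≤ 2.23606798 := Real.sqrt_le_iff.mpr ⟨by norm_num, by norm_num⟩
    have hp : (0:ℝ) < Real.sqrt 5 := Real.sqrt_pos.mpr (by norm_num)
    exact ⟨by rw [inv_eq_one_div]; exact one_div_le_one_div_of_le hp hhi,
           by rw [inv_eq_one_div]; exact one_div_le_one_div_of_le (by norm_num) hlo⟩
  have s6 : ((1:ℝ)/2.44948975) ≤ (Real.sqrt 6)⁻¹ ∧ (Real.sqrt 6)⁻¹ ≤ 1/2.44948974 := by
    have hlo : (2.44948974:ℝ) ≤ Real.sqrt 6 := (Real.le_sqrt' (by norm_num)).mpr (by norm_num)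
    have hhi : Real.sqrt 6 ≤ 2.44948975 := Real.sqrt_le_iff.mpr ⟨by norm_num, by norm_num⟩
    have hp : (0:ℝ) < Real.sqrt 6 := Real.sqrt_pos.mpr (by norm_num)
    exact ⟨by rw [inv_eq_one_div]; exact one_div_le_one_div_of_le hp hhi,
           by rw [inv_eq_one_div]; exact one_div_le_one_div_of_le (by norm_num) hlo⟩
  have s7 : ((1:ℝ)/2.64575132) ≤ (Real.sqrt 7)⁻¹ ∧ (Real.sqrt 7)⁻¹ ≤ 1/2.64575131 := by
    have hlo : (2.64575131:ℝ) ≤ Real.sqrt 7 := (Real.le_sqrt' (by norm_num)).mpr (by norm_num)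
    have hhi : Real.sqrt 7 ≤ 2.64575132 := Real.sqrt_le_iff.mpr ⟨by norm_num, by norm_num⟩
    have hp : (0:ℝ) < Real.sqrt 7 := Real.sqrt_pos.mpr (by norm_num)
    exact ⟨by rw [inv_eq_one_div]; exact one_div_le_one_div_of_le hp hhi,
           by rw [inv_eq_one_div]; exact one_div_le_one_div_of_le (by norm_num) hlo⟩
  have s8 : ((1:ℝ)/2.82842713) ≤ (Real.sqrt 8)⁻¹ ∧ (Real.sqrt 8)⁻¹ ≤ 1/2.82842712 := by
    have hlo : (2.82842712:ℝ) ≤ Real.sqrt 8 := (Real.le_sqrt' (by norm_num)).mpr (by norm_num)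
    have hhi : Real.sqrt 8 ≤ 2.82842713 := Real.sqrt_le_iff.mpr ⟨by norm_num, by norm_num⟩
    have hp : (0:ℝ) < Real.sqrt 8 := Real.sqrt_pos.mpr (by norm_num)
    exact ⟨by rw [inv_eq_one_div]; exact one_div_le_one_div_of_le hp hhi,
           by rw [inv_eq_one_div]; exact one_div_le_one_div_of_le (by norm_num) hlo⟩
  have s9 : ((1:ℝ)/3.00000001) ≤ (Real.sqrt 9)⁻¹ ∧ (Real.sqrt 9)⁻¹ ≤ 1/3 := by
    have hlo : (3:ℝ) ≤ Real.sqrt 9 := (Real.le_sqrt' (by norm_num)).mpr (by norm_num)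
    have hhi : Real.sqrt 9 ≤ 3.00000001 := Real.sqrt_le_iff.mpr ⟨by norm_num, by norm_num⟩
    have hp : (0:ℝ) < Real.sqrt 9 := Real.sqrt_pos.mpr (by norm_num)
    exact ⟨by rw [inv_eq_one_div]; exact one_div_le_one_div_of_le hp hhi,
           by rw [inv_eq_one_div]; exact one_div_le_one_div_of_le (by norm_num) hlo⟩
  have s10 : ((1:ℝ)/3.16227767) ≤ (Real.sqrt 10)⁻¹ ∧ (Real.sqrt 10)⁻¹ ≤ 1/3.16227766 := by
    have hlo : (3.16227766:ℝ) ≤ Real.sqrt 10 := (Real.le_sqrt' (by norm_num)).mpr (by norm_num)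
    have hhi : Real.sqrt 10 ≤ 3.16227767 := Real.sqrt_le_iff.mpr ⟨by norm_num, by norm_num⟩
    have hp : (0:ℝ) < Real.sqrt 10 := Real.sqrt_pos.mpr (by norm_num)
    exact ⟨by rw [inv_eq_one_div]; exact one_div_le_one_div_of_le hp hhi,
           by rw [inv_eq_one_div]; exact one_div_le_one_div_of_le (by norm_num) hlo⟩
  have s11 : ((1:ℝ)/3.31662480) ≤ (Real.sqrt 11)⁻¹ ∧ (Real.sqrt 11)⁻¹ ≤ 1/3.31662479 := by
    have hlo : (3.31662479:ℝ) ≤ Real.sqrt 11 := (Real.le_sqrt' (by norm_num)).mpr (by norm_num)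
    have hhi : Real.sqrt 11 ≤ 3.31662480 := Real.sqrt_le_iff.mpr ⟨by norm_num, by norm_num⟩
    have hp : (0:ℝ) < Real.sqrt 11 := Real.sqrt_pos.mpr (by norm_num)
    exact ⟨by rw [inv_eq_one_div]; exact one_div_le_one_div_of_le hp hhi,
           by rw [inv_eq_one_div]; exact one_div_le_one_div_of_le (by norm_num) hlo⟩
  have s12 : ((1:ℝ)/3.46410162) ≤ (Real.sqrt 12)⁻¹ ∧ (Real.sqrt 12)⁻¹ ≤ 1/3.46410161 := by
    have hlo : (3.46410161:ℝ) ≤ Real.sqrt 12 := (Real.le_sqrt' (by norm_num)).mpr (by norm_num)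
    have hhi : Real.sqrt 12 ≤ 3.46410162 := Real.sqrt_le_iff.mpr ⟨by norm_num, by norm_num⟩
    have hp : (0:ℝ) < Real.sqrt 12 := Real.sqrt_pos.mpr (by norm_num)
    exact ⟨by rw [inv_eq_one_div]; exact one_div_le_one_div_of_le hp hhi,
           by rw [inv_eq_one_div]; exact one_div_le_one_div_of_le (by norm_num) hlo⟩
  have s13 : ((1:ℝ)/3.60555128) ≤ (Real.sqrt 13)⁻¹ ∧ (Real.sqrt 13)⁻¹ ≤ 1/3.60555127 := by
    have hlo : (3.60555127:ℝ) ≤ Real.sqrt 13 := (Real.le_sqrt' (by norm_num)).mpr (by norm_num)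
    have hhi : Real.sqrt 13 ≤ 3.60555128 := Real.sqrt_le_iff.mpr ⟨by norm_num, by norm_num⟩
    have hp : (0:ℝ) < Real.sqrt 13 := Real.sqrt_pos.mpr (by norm_num)
    exact ⟨by rw [inv_eq_one_div]; exact one_div_le_one_div_of_le hp hhi,
           by rw [inv_eq_one_div]; exact one_div_le_one_div_of_le (by norm_num) hlo⟩
  have s14 : ((1:ℝ)/3.74165739) ≤ (Real.sqrt 14)⁻¹ ∧ (Real.sqrt 14)⁻¹ ≤ 1/3.74165738 := by
    have hlo : (3.74165738:ℝ) ≤ Real.sqrt 14 := (Real.le_sqrt' (by norm_num)).mpr (by norm_num)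
    have hhi : Real.sqrt 14 ≤ 3.74165739 := Real.sqrt_le_iff.mpr ⟨by norm_num, by norm_num⟩
    have hp : (0:ℝ) < Real.sqrt 14 := Real.sqrt_pos.mpr (by norm_num)
    exact ⟨by rw [inv_eq_one_div]; exact one_div_le_one_div_of_le hp hhi,
           by rw [inv_eq_one_div]; exact one_div_le_one_div_of_le (by norm_num) hlo⟩
  have s15 : ((1:ℝ)/3.87298335) ≤ (Real.sqrt 15)⁻¹ ∧ (Real.sqrt 15)⁻¹ ≤ 1/3.87298334 := by
    have hlo : (3.87298334:ℝ) ≤ Real.sqrt 15 := (Real.le_sqrt' (by norm_num)).mpr (by norm_num)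
    have hhi : Real.sqrt 15 ≤ 3.87298335 := Real.sqrt_le_iff.mpr ⟨by norm_num, by norm_num⟩
    have hp : (0:ℝ) < Real.sqrt 15 := Real.sqrt_pos.mpr (by norm_num)
    exact ⟨by rw [inv_eq_one_div]; exact one_div_le_one_div_of_le hp hhi,
           by rw [inv_eq_one_div]; exact one_div_le_one_div_of_le (by norm_num) hlo⟩
  have s16 : ((1:ℝ)/4.00000001) ≤ (Real.sqrt 16)⁻¹ ∧ (Real.sqrt 16)⁻¹ ≤ 1/4 := by
    have hlo : (4:ℝ) ≤ Real.sqrt 16 := (Real.le_sqrt' (by norm_num)).mpr (by norm_num)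
    have hhi : Real.sqrt 16 ≤ 4.00000001 := Real.sqrt_le_iff.mpr ⟨by norm_num, by norm_num⟩
    have hp : (0:ℝ) < Real.sqrt 16 := Real.sqrt_pos.mpr (by norm_num)
    exact ⟨by rw [inv_eq_one_div]; exact one_div_le_one_div_of_le hp hhi,
           by rw [inv_eq_one_div]; exact one_div_le_one_div_of_le (by norm_num) hlo⟩
  have s17 : ((1:ℝ)/4.12310563) ≤ (Real.sqrt 17)⁻¹ ∧ (Real.sqrt 17)⁻¹ ≤ 1/4.12310562 := by
    have hlo : (4.12310562:ℝ) ≤ Real.sqrt 17 := (Real.le_sqrt' (by norm_num)).mpr (by norm_num)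
    have hhi : Real.sqrt 17 ≤ 4.12310563 := Real.sqrt_le_iff.mpr ⟨by norm_num, by norm_num⟩
    have hp : (0:ℝ) < Real.sqrt 17 := Real.sqrt_pos.mpr (by norm_num)
    exact ⟨by rw [inv_eq_one_div]; exact one_div_le_one_div_of_le hp hhi,
           by rw [inv_eq_one_div]; exact one_div_le_one_div_of_le (by norm_num) hlo⟩
  have s18 : ((1:ℝ)/4.24264069) ≤ (Real.sqrt 18)⁻¹ ∧ (Real.sqrt 18)⁻¹ ≤ 1/4.24264068 := by
    have hlo : (4.24264068:ℝ) ≤ Real.sqrt 18 := (Real.le_sqrt' (by norm_num)).mpr (by norm_num)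
    have hhi : Real.sqrt 18 ≤ 4.24264069 := Real.sqrt_le_iff.mpr ⟨by norm_num, by norm_num⟩
    have hp : (0:ℝ) < Real.sqrt 18 := Real.sqrt_pos.mpr (by norm_num)
    exact ⟨by rw [inv_eq_one_div]; exact one_div_le_one_div_of_le hp hhi,
           by rw [inv_eq_one_div]; exact one_div_le_one_div_of_le (by norm_num) hlo⟩
  have s19 : ((1:ℝ)/4.35889895) ≤ (Real.sqrt 19)⁻¹ ∧ (Real.sqrt 19)⁻¹ ≤ 1/4.35889894 := by
    have hlo : (4.35889894:ℝ) ≤ Real.sqrt 19 := (Real.le_sqrt' (by norm_num)).mpr (by norm_num)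
    have hhi : Real.sqrt 19 ≤ 4.35889895 := Real.sqrt_le_iff.mpr ⟨by norm_num, by norm_num⟩
    have hp : (0:ℝ) < Real.sqrt 19 := Real.sqrt_pos.mpr (by norm_num)
    exact ⟨by rw [inv_eq_one_div]; exact one_div_le_one_div_of_le hp hhi,
           by rw [inv_eq_one_div]; exact one_div_le_one_div_of_le (by norm_num) hlo⟩
  have s20 : ((1:ℝ)/4.47213596) ≤ (Real.sqrt 20)⁻¹ ∧ (Real.sqrt 20)⁻¹ ≤ 1/4.47213595 := by
    have hlo : (4.47213595:ℝ) ≤ Real.sqrt 20 := (Real.le_sqrt' (by norm_num)).mpr (by norm_num)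
    have hhi : Real.sqrt 20 ≤ 4.47213596 := Real.sqrt_le_iff.mpr ⟨by norm_num, by norm_num⟩
    have hp : (0:ℝ) < Real.sqrt 20 := Real.sqrt_pos.mpr (by norm_num)
    exact ⟨by rw [inv_eq_one_div]; exact one_div_le_one_div_of_le hp hhi,
           by rw [inv_eq_one_div]; exact one_div_le_one_div_of_le (by norm_num) hlo⟩
  have s21 : ((1:ℝ)/4.58257570) ≤ (Real.sqrt 21)⁻¹ ∧ (Real.sqrt 21)⁻¹ ≤ 1/4.58257569 := by
    have hlo : (4.58257569:ℝ) ≤ Real.sqrt 21 := (Real.le_sqrt' (by norm_num)).mpr (by norm_num)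
    have hhi : Real.sqrt 21 ≤ 4.58257570 := Real.sqrt_le_iff.mpr ⟨by norm_num, by norm_num⟩
    have hp : (0:ℝ) < Real.sqrt 21 := Real.sqrt_pos.mpr (by norm_num)
    exact ⟨by rw [inv_eq_one_div]; exact one_div_le_one_div_of_le hp hhi,
           by rw [inv_eq_one_div]; exact one_div_le_one_div_of_le (by norm_num) hlo⟩
  have s22 : ((1:ℝ)/4.69041576) ≤ (Real.sqrt 22)⁻¹ ∧ (Real.sqrt 22)⁻¹ ≤ 1/4.69041575 := by
    have hlo : (4.69041575:ℝ) ≤ Real.sqrt 22 := (Real.le_sqrt' (by norm_num)).mpr (by norm_num)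
    have hhi : Real.sqrt 22 ≤ 4.69041576 := Real.sqrt_le_iff.mpr ⟨by norm_num, by norm_num⟩
    have hp : (0:ℝ) < Real.sqrt 22 := Real.sqrt_pos.mpr (by norm_num)
    exact ⟨by rw [inv_eq_one_div]; exact one_div_le_one_div_of_le hp hhi,
           by rw [inv_eq_one_div]; exact one_div_le_one_div_of_le (by norm_num) hlo⟩
  have s23 : ((1:ℝ)/4.79583153) ≤ (Real.sqrt 23)⁻¹ ∧ (Real.sqrt 23)⁻¹ ≤ 1/4.79583152 := by
    have hlo : (4.79583152:ℝ) ≤ Real.sqrt 23 := (Real.le_sqrt' (by norm_num)).mpr (by norm_num)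
    have hhi : Real.sqrt 23 ≤ 4.79583153 := Real.sqrt_le_iff.mpr ⟨by norm_num, by norm_num⟩
    have hp : (0:ℝ) < Real.sqrt 23 := Real.sqrt_pos.mpr (by norm_num)
    exact ⟨by rw [inv_eq_one_div]; exact one_div_le_one_div_of_le hp hhi,
           by rw [inv_eq_one_div]; exact one_div_le_one_div_of_le (by norm_num) hlo⟩
  have s24 : ((1:ℝ)/4.89897949) ≤ (Real.sqrt 24)⁻¹ ∧ (Real.sqrt 24)⁻¹ ≤ 1/4.89897948 := by
    have hlo : (4.89897948:ℝ) ≤ Real.sqrt 24 := (Real.le_sqrt' (by norm_num)).mpr (by norm_num)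
    have hhi : Real.sqrt 24 ≤ 4.89897949 := Real.sqrt_le_iff.mpr ⟨by norm_num, by norm_num⟩
    have hp : (0:ℝ) < Real.sqrt 24 := Real.sqrt_pos.mpr (by norm_num)
    exact ⟨by rw [inv_eq_one_div]; exact one_div_le_one_div_of_le hp hhi,
           by rw [inv_eq_one_div]; exact one_div_le_one_div_of_le (by norm_num) hlo⟩
  have s25 : ((1:ℝ)/5.00000001) ≤ (Real.sqrt 25)⁻¹ ∧ (Real.sqrt 25)⁻¹ ≤ 1/5 := by
    have hlo : (5:ℝ) ≤ Real.sqrt 25 := (Real.le_sqrt' (by norm_num)).mpr (by norm_num)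
    have hhi : Real.sqrt 25 ≤ 5.00000001 := Real.sqrt_le_iff.mpr ⟨by norm_num, by norm_num⟩
    have hp : (0:ℝ) < Real.sqrt 25 := Real.sqrt_pos.mpr (by norm_num)
    exact ⟨by rw [inv_eq_one_div]; exact one_div_le_one_div_of_le hp hhi,
           by rw [inv_eq_one_div]; exact one_div_le_one_div_of_le (by norm_num) hlo⟩
  have s26 : ((1:ℝ)/5.09901952) ≤ (Real.sqrt 26)⁻¹ ∧ (Real.sqrt 26)⁻¹ ≤ 1/5.09901951 := by
    have hlo : (5.09901951:ℝ) ≤ Real.sqrt 26 := (Real.le_sqrt' (by norm_num)).mpr (by norm_num)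
    have hhi : Real.sqrt 26 ≤ 5.09901952 := Real.sqrt_le_iff.mpr ⟨by norm_num, by norm_num⟩
    have hp : (0:ℝ) < Real.sqrt 26 := Real.sqrt_pos.mpr (by norm_num)
    exact ⟨by rw [inv_eq_one_div]; exact one_div_le_one_div_of_le hp hhi,
           by rw [inv_eq_one_div]; exact one_div_le_one_div_of_le (by norm_num) hlo⟩
  have s27 : ((1:ℝ)/5.19615243) ≤ (Real.sqrt 27)⁻¹ ∧ (Real.sqrt 27)⁻¹ ≤ 1/5.19615242 := by
    have hlo : (5.19615242:ℝ) ≤ Real.sqrt 27 := (Real.le_sqrt' (by norm_num)).mpr (by norm_num)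
    have hhi : Real.sqrt 27 ≤ 5.19615243 := Real.sqrt_le_iff.mpr ⟨by norm_num, by norm_num⟩
    have hp : (0:ℝ) < Real.sqrt 27 := Real.sqrt_pos.mpr (by norm_num)
    exact ⟨by rw [inv_eq_one_div]; exact one_div_le_one_div_of_le hp hhi,
           by rw [inv_eq_one_div]; exact one_div_le_one_div_of_le (by norm_num) hlo⟩
  have s28 : ((1:ℝ)/5.29150263) ≤ (Real.sqrt 28)⁻¹ ∧ (Real.sqrt 28)⁻¹ ≤ 1/5.29150262 := by
    have hlo : (5.29150262:ℝ) ≤ Real.sqrt 28 := (Real.le_sqrt' (by norm_num)).mpr (by norm_num)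
    have hhi : Real.sqrt 28 ≤ 5.29150263 := Real.sqrt_le_iff.mpr ⟨by norm_num, by norm_num⟩
    have hp : (0:ℝ) < Real.sqrt 28 := Real.sqrt_pos.mpr (by norm_num)
    exact ⟨by rw [inv_eq_one_div]; exact one_div_le_one_div_of_le hp hhi,
           by rw [inv_eq_one_div]; exact one_div_le_one_div_of_le (by norm_num) hlo⟩
  have s29 : ((1:ℝ)/5.38516481) ≤ (Real.sqrt 29)⁻¹ ∧ (Real.sqrt 29)⁻¹ ≤ 1/5.3851648 := by
    have hlo : (5.3851648:ℝ) ≤ Real.sqrt 29 := (Real.le_sqrt' (by norm_num)).mpr (by norm_num)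
    have hhi : Real.sqrt 29 ≤ 5.38516481 := Real.sqrt_le_iff.mpr ⟨by norm_num, by norm_num⟩
    have hp : (0:ℝ) < Real.sqrt 29 := Real.sqrt_pos.mpr (by norm_num)
    exact ⟨by rw [inv_eq_one_div]; exact one_div_le_one_div_of_le hp hhi,
           by rw [inv_eq_one_div]; exact one_div_le_one_div_of_le (by norm_num) hlo⟩
  have s30 : ((1:ℝ)/5.47722558) ≤ (Real.sqrt 30)⁻¹ ∧ (Real.sqrt 30)⁻¹ ≤ 1/5.47722557 := by
    have hlo : (5.47722557:ℝ) ≤ Real.sqrt 30 := (Real.le_sqrt' (by norm_num)).mpr (by norm_num)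
    have hhi : Real.sqrt 30 ≤ 5.47722558 := Real.sqrt_le_iff.mpr ⟨by norm_num, by norm_num⟩
    have hp : (0:ℝ) < Real.sqrt 30 := Real.sqrt_pos.mpr (by norm_num)
    exact ⟨by rw [inv_eq_one_div]; exact one_div_le_one_div_of_le hp hhi,
           by rw [inv_eq_one_div]; exact one_div_le_one_div_of_le (by norm_num) hlo⟩
  have s31 : ((1:ℝ)/5.56776437) ≤ (Real.sqrt 31)⁻¹ ∧ (Real.sqrt 31)⁻¹ ≤ 1/5.56776436 := by
    have hlo : (5.56776436:ℝ) ≤ Real.sqrt 31 := (Real.le_sqrt' (by norm_num)).mpr (by norm_num)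
    have hhi : Real.sqrt 31 ≤ 5.56776437 := Real.sqrt_le_iff.mpr ⟨by norm_num, by norm_num⟩
    have hp : (0:ℝ) < Real.sqrt 31 := Real.sqrt_pos.mpr (by norm_num)
    exact ⟨by rw [inv_eq_one_div]; exact one_div_le_one_div_of_le hp hhi,
           by rw [inv_eq_one_div]; exact one_div_le_one_div_of_le (by norm_num) hlo⟩
  have s32 : ((1:ℝ)/5.65685425) ≤ (Real.sqrt 32)⁻¹ ∧ (Real.sqrt 32)⁻¹ ≤ 1/5.65685424 := by
    have hlo : (5.65685424:ℝ) ≤ Real.sqrt 32 := (Real.le_sqrt' (by norm_num)).mpr (by norm_num)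
    have hhi : Real.sqrt 32 ≤ 5.65685425 := Real.sqrt_le_iff.mpr ⟨by norm_num, by norm_num⟩
    have hp : (0:ℝ) < Real.sqrt 32 := Real.sqrt_pos.mpr (by norm_num)
    exact ⟨by rw [inv_eq_one_div]; exact one_div_le_one_div_of_le hp hhi,
           by rw [inv_eq_one_div]; exact one_div_le_one_div_of_le (by norm_num) hlo⟩
  have s33 : ((1:ℝ)/5.74456265) ≤ (Real.sqrt 33)⁻¹ ∧ (Real.sqrt 33)⁻¹ ≤ 1/5.74456264 := by
    have hlo : (5.74456264:ℝ) ≤ Real.sqrt 33 := (Real.le_sqrt' (by norm_num)).mpr (by norm_num)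
    have hhi : Real.sqrt 33 ≤ 5.74456265 := Real.sqrt_le_iff.mpr ⟨by norm_num, by norm_num⟩
    have hp : (0:ℝ) < Real.sqrt 33 := Real.sqrt_pos.mpr (by norm_num)
    exact ⟨by rw [inv_eq_one_div]; exact one_div_le_one_div_of_le hp hhi,
           by rw [inv_eq_one_div]; exact one_div_le_one_div_of_le (by norm_num) hlo⟩
  have s34 : ((1:ℝ)/5.83095190) ≤ (Real.sqrt 34)⁻¹ ∧ (Real.sqrt 34)⁻¹ ≤ 1/5.83095189 := by
    have hlo : (5.83095189:ℝ) ≤ Real.sqrt 34 := (Real.le_sqrt' (by norm_num)).mpr (by norm_num)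
    have hhi : Real.sqrt 34 ≤ 5.83095190 := Real.sqrt_le_iff.mpr ⟨by norm_num, by norm_num⟩
    have hp : (0:ℝ) < Real.sqrt 34 := Real.sqrt_pos.mpr (by norm_num)
    exact ⟨by rw [inv_eq_one_div]; exact one_div_le_one_div_of_le hp hhi,
           by rw [inv_eq_one_div]; exact one_div_le_one_div_of_le (by norm_num) hlo⟩
  have s35 : ((1:ℝ)/5.91607979) ≤ (Real.sqrt 35)⁻¹ ∧ (Real.sqrt 35)⁻¹ ≤ 1/5.91607978 := by
    have hlo : (5.91607978:ℝ) ≤ Real.sqrt 35 := (Real.le_sqrt' (by norm_num)).mpr (by norm_num)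
    have hhi : Real.sqrt 35 ≤ 5.91607979 := Real.sqrt_le_iff.mpr ⟨by norm_num, by norm_num⟩
    have hp : (0:ℝ) < Real.sqrt 35 := Real.sqrt_pos.mpr (by norm_num)
    exact ⟨by rw [inv_eq_one_div]; exact one_div_le_one_div_of_le hp hhi,
           by rw [inv_eq_one_div]; exact one_div_le_one_div_of_le (by norm_num) hlo⟩
  have s36 : ((1:ℝ)/6.00000001) ≤ (Real.sqrt 36)⁻¹ ∧ (Real.sqrt 36)⁻¹ ≤ 1/6 := by
    have hlo : (6:ℝ) ≤ Real.sqrt 36 := (Real.le_sqrt' (by norm_num)).mpr (by norm_num)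
    have hhi : Real.sqrt 36 ≤ 6.00000001 := Real.sqrt_le_iff.mpr ⟨by norm_num, by norm_num⟩
    have hp : (0:ℝ) < Real.sqrt 36 := Real.sqrt_pos.mpr (by norm_num)
    exact ⟨by rw [inv_eq_one_div]; exact one_div_le_one_div_of_le hp hhi,
           by rw [inv_eq_one_div]; exact one_div_le_one_div_of_le (by norm_num) hlo⟩
  have s37 : ((1:ℝ)/6.08276254) ≤ (Real.sqrt 37)⁻¹ ∧ (Real.sqrt 37)⁻¹ ≤ 1/6.08276253 := by
    have hlo : (6.08276253:ℝ) ≤ Real.sqrt 37 := (Real.le_sqrt' (by norm_num)).mpr (by norm_num)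
    have hhi : Real.sqrt 37 ≤ 6.08276254 := Real.sqrt_le_iff.mpr ⟨by norm_num, by norm_num⟩
    have hp : (0:ℝ) < Real.sqrt 37 := Real.sqrt_pos.mpr (by norm_num)
    exact ⟨by rw [inv_eq_one_div]; exact one_div_le_one_div_of_le hp hhi,
           by rw [inv_eq_one_div]; exact one_div_le_one_div_of_le (by norm_num) hlo⟩
  have s38 : ((1:ℝ)/6.16441401) ≤ (Real.sqrt 38)⁻¹ ∧ (Real.sqrt 38)⁻¹ ≤ 1/6.164414 := by
    have hlo : (6.164414:ℝ) ≤ Real.sqrt 38 := (Real.le_sqrt' (by norm_num)).mpr (by norm_num)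
    have hhi : Real.sqrt 38 ≤ 6.16441401 := Real.sqrt_le_iff.mpr ⟨by norm_num, by norm_num⟩
    have hp : (0:ℝ) < Real.sqrt 38 := Real.sqrt_pos.mpr (by norm_num)
    exact ⟨by rw [inv_eq_one_div]; exact one_div_le_one_div_of_le hp hhi,
           by rw [inv_eq_one_div]; exact one_div_le_one_div_of_le (by norm_num) hlo⟩
  have s39 : ((1:ℝ)/6.24499800) ≤ (Real.sqrt 39)⁻¹ ∧ (Real.sqrt 39)⁻¹ ≤ 1/6.24499799 := by
    have hlo : (6.24499799:ℝ) ≤ Real.sqrt 39 := (Real.le_sqrt' (by norm_num)).mpr (by norm_num)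
    have hhi : Real.sqrt 39 ≤ 6.24499800 := Real.sqrt_le_iff.mpr ⟨by norm_num, by norm_num⟩
    have hp : (0:ℝ) < Real.sqrt 39 := Real.sqrt_pos.mpr (by norm_num)
    exact ⟨by rw [inv_eq_one_div]; exact one_div_le_one_div_of_le hp hhi,
           by rw [inv_eq_one_div]; exact one_div_le_one_div_of_le (by norm_num) hlo⟩
  have s40 : ((1:ℝ)/6.32455533) ≤ (Real.sqrt 40)⁻¹ ∧ (Real.sqrt 40)⁻¹ ≤ 1/6.32455532 := by
    have hlo : (6.32455532:ℝ) ≤ Real.sqrt 40 := (Real.le_sqrt' (by norm_num)).mpr (by norm_num)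
    have hhi : Real.sqrt 40 ≤ 6.32455533 := Real.sqrt_le_iff.mpr ⟨by norm_num, by norm_num⟩
    have hp : (0:ℝ) < Real.sqrt 40 := Real.sqrt_pos.mpr (by norm_num)
    exact ⟨by rw [inv_eq_one_div]; exact one_div_le_one_div_of_le hp hhi,
           by rw [inv_eq_one_div]; exact one_div_le_one_div_of_le (by norm_num) hlo⟩
  have s41 : ((1:ℝ)/6.40312424) ≤ (Real.sqrt 41)⁻¹ ∧ (Real.sqrt 41)⁻¹ ≤ 1/6.40312423 := by
    have hlo : (6.40312423:ℝ) ≤ Real.sqrt 41 := (Real.le_sqrt' (by norm_num)).mpr (by norm_num)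
    have hhi : Real.sqrt 41 ≤ 6.40312424 := Real.sqrt_le_iff.mpr ⟨by norm_num, by norm_num⟩
    have hp : (0:ℝ) < Real.sqrt 41 := Real.sqrt_pos.mpr (by norm_num)
    exact ⟨by rw [inv_eq_one_div]; exact one_div_le_one_div_of_le hp hhi,
           by rw [inv_eq_one_div]; exact one_div_le_one_div_of_le (by norm_num) hlo⟩
  have hGeq : Gval = ∑ k ∈ Finset.range 20, ttm k + ∑' j, ttm (j+20) :=
    (Summable.sum_add_tsum_nat_add 20 summable_tt).symm
  have htl := tail_lb
  have htu := tail_ub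
  unfold hbf at htl
  unfold gb at htu
  norm_num at htl htu
  rw [hGeq]
  set T := ∑' (j : ℕ), ttm (j+20) with hT
  simp only [Finset.sum_range_succ, Finset.sum_range_zero, ttm]
  norm_num
  constructor
  · linarith [s1.1, s2.2, s3.1, s4.2, s5.1, s6.2, s7.1, s8.2, s9.1, s10.2, s11.1, s12.2, s13.1, s14.2, s15.1, s16.2, s17.1, s18.2, s19.1, s20.2, s21.1, s22.2, s23.1, s24.2, s25.1, s26.2, s27.1, s28.2, s29.1, s30.2, s31.1, s32.2, s33.1, s34.2, s35.1, s36.2, s37.1, s38.2, s39.1, s40.2, htl]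
  · linarith [s1.2, s2.1, s3.2, s4.1, s5.2, s6.1, s7.2, s8.1, s9.2, s10.1, s11.2, s12.1, s13.2, s14.1, s15.2, s16.1, s17.2, s18.1, s19.2, s20.1, s21.2, s22.1, s23.2, s24.1, s25.2, s26.1, s27.2, s28.1, s29.2, s30.1, s31.2, s32.1, s33.2, s34.1, s35.2, s36.1, s37.2, s38.1, s39.2, s40.1, htu]

end ZetaHalfAux

namespace ZetaHalfAux
open Complex Real

def Phi : ZMod 2 → ℂ := fun j => if j = 0 then -1 else 1

noncomputable def FF (s : ℂ) : ℂ :=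
  ∑' k : ℕ, (((2*k+1 : ℕ) : ℂ)^(-s) - ((2*k+2 : ℕ) : ℂ)^(-s))



lemma Phi_sum : ∑ j, Phi j = 0 := by
  show Phi 0 + (Phi 1 + 0) = 0
  norm_num [Phi]

lemma cpow_diff_bound {s : ℂ} (hs : s ≠ 0) (hre : -1 ≤ s.re) {a b : ℝ} (ha : 1 ≤ a)
    (hab : a ≤ b) :
    ‖(b:ℂ)^(-s) - (a:ℂ)^(-s)‖ ≤ ‖s‖ * a^(-(s.re+1)) * (b - a) := by
  have ha0 : (0:ℝ) < a := by linarith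
  have hderiv : ∀ x ∈ Set.Icc a b, HasDerivWithinAt (fun y : ℝ => (y:ℂ)^(-s))
      (-s * (x:ℂ)^(-s-1)) (Set.Icc a b) x := by
    intro x hx
    have hx0 : x ≠ 0 := ne_of_gt (lt_of_lt_of_le ha0 hx.1)
    have h1 : (-s-1 : ℂ) ≠ -1 := by
      intro h; apply hs; have : -s = 0 := by linear_combination h
      simpa [neg_eq_zero] using this
    have h2 := hasDerivAt_ofReal_cpow_const' hx0 h1
    have h3 : -s - 1 + 1 = -s := by ring
    rw [h3] at h2
    have h4 := h2.const_mul (-s)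
    have h5 : (fun y : ℝ => -s * ((y:ℂ)^(-s) / (-s))) = fun y : ℝ => (y:ℂ)^(-s) := by
      funext y; field_simp
    rw [h5] at h4
    exact h4.hasDerivWithinAt
  have hbound : ∀ x ∈ Set.Icc a b, ‖-s * (x:ℂ)^(-s-1)‖ ≤ ‖s‖ * a^(-(s.re+1)) := by
    intro x hx
    rw [norm_mul, norm_neg]
    apply mul_le_mul_of_nonneg_left _ (norm_nonneg s)
    have hx0 : (0:ℝ) < x := lt_of_lt_of_le ha0 hx.1
    rw [Complex.norm_cpow_eq_rpow_re_of_pos hx0]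
    have : (-s-1).re = -(s.re+1) := by simp; ring
    rw [this]
    exact Real.rpow_le_rpow_of_nonpos ha0 hx.1 (by linarith)
  have := Convex.norm_image_sub_le_of_norm_hasDerivWithin_le hderiv hbound (convex_Icc a b)
    (Set.left_mem_Icc.mpr hab) (Set.right_mem_Icc.mpr hab)
  calc ‖(b:ℂ)^(-s) - (a:ℂ)^(-s)‖ ≤ ‖s‖ * a^(-(s.re+1)) * ‖b - a‖ := this
    _ = ‖s‖ * a^(-(s.re+1)) * (b - a) := by rw [Real.norm_eq_abs, _root_.abs_of_nonneg (by linarith)]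


lemma FF_diff : DifferentiableOn ℂ FF {s : ℂ | 1/4 < s.re} := by
  intro s₀ hs₀
  simp only [Set.mem_setOf_eq] at hs₀
  apply DifferentiableAt.differentiableWithinAt
  set ε := (s₀.re - 1/4)/2 with hε
  have hε0 : 0 < ε := by rw [hε]; linarith
  have hball : DifferentiableOn ℂ FF (Metric.ball s₀ ε) := by
    have hre_ball : ∀ w ∈ Metric.ball s₀ ε, 1/4 + ε ≤ w.re := by
      intro w hw
      have h1 : |(w - s₀).re| ≤ ‖w - s₀‖ := Complex.abs_re_le_norm _
      have h2 : ‖w - s₀‖ < ε := by simpa [dist_eq_norm] using hw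
      have h3 : (w - s₀).re = w.re - s₀.re := by simp
      rw [h3] at h1
      have h4 := (abs_le.mp h1).1
      linarith [hε]
    have hnorm_ball : ∀ w ∈ Metric.ball s₀ ε, ‖w‖ ≤ ‖s₀‖ + ε := by
      intro w hw
      have h2 : ‖w - s₀‖ < ε := by simpa [dist_eq_norm] using hw
      calc ‖w‖ = ‖s₀ + (w - s₀)‖ := by ring_nf
        _ ≤ ‖s₀‖ + ‖w - s₀‖ := norm_add_le _ _
        _ ≤ ‖s₀‖ + ε := by linarith
    apply differentiableOn_tsum_of_summable_norm
      (u := fun k : ℕ => (‖s₀‖ + ε) * (((k:ℝ)+1))^(-(1 + (1/4 + ε))))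
    case hu =>
      apply Summable.mul_left
      have hs : Summable (fun n : ℕ => ((n:ℝ) ^ (1 + (1/4 + ε)))⁻¹) :=
        Real.summable_nat_rpow_inv.mpr (by linarith)
      have h5 := (summable_nat_add_iff (f := fun n : ℕ => ((n:ℝ) ^ (1 + (1/4 + ε)))⁻¹) 1).mpr hs
      apply h5.congr
      intro k
      rw [Real.rpow_neg (by positivity)]
      norm_num
    case hf =>
      intro k
      have hne1 : ((2*k+1 : ℕ) : ℂ) ≠ 0 := Nat.cast_ne_zero.mpr (by omega)
      have hne2 : ((2*k+2 : ℕ) : ℂ) ≠ 0 := Nat.cast_ne_zero.mpr (by omega)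
      exact ((differentiable_neg.const_cpow (Or.inl hne1)).sub
        (differentiable_neg.const_cpow (Or.inl hne2))).differentiableOn
    case hU => exact Metric.isOpen_ball
    case hF_le =>
      intro k w hw
      have hwre := hre_ball w hw
      have hwnorm := hnorm_ball w hw
      have hw0 : w ≠ 0 := by
        intro h; rw [h] at hwre; simp at hwre; linarith
      have hkey := cpow_diff_bound (s := w) hw0 (by linarith)
        (a := ((2*k+1 : ℕ) : ℝ)) (b := ((2*k+2 : ℕ) : ℝ))
        (by push_cast; linarith [Nat.cast_nonneg (α := ℝ) k])
        (by push_cast; linarith)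
      rw [norm_sub_rev]
      push_cast at hkey ⊢
      calc ‖(2*(k:ℂ)+2)^(-w) - (2*(k:ℂ)+1)^(-w)‖
          ≤ ‖w‖ * (2*(k:ℝ)+1)^(-(w.re+1)) * ((2*(k:ℝ)+2) - (2*(k:ℝ)+1)) := hkey
        _ = ‖w‖ * (2*(k:ℝ)+1)^(-(w.re+1)) := by ring_nf
        _ ≤ (‖s₀‖ + ε) * (((k:ℝ)+1))^(-(1 + (1/4 + ε))) := by
            apply mul_le_mul hwnorm _ (by positivity) (by positivity)
            calc (2*(k:ℝ)+1)^(-(w.re+1)) ≤ ((k:ℝ)+1)^(-(w.re+1)) :=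
                  Real.rpow_le_rpow_of_nonpos (by positivity) (by linarith) (by linarith)
              _ ≤ ((k:ℝ)+1)^(-(1 + (1/4 + ε))) :=
                  Real.rpow_le_rpow_of_exponent_le (by linarith [Nat.cast_nonneg (α := ℝ) k])
                    (by linarith)
  exact hball.differentiableAt (Metric.isOpen_ball.mem_nhds (Metric.mem_ball_self hε0))


section gt_one
variable {s : ℂ} (hs : 1 < s.re)
include hs

lemma hS : Summable (fun n : ℕ => (n:ℂ)^(-s)) :=
  (summable_one_div_nat_cpow.mpr hs).congr fun n => by rw [cpow_neg, one_div]

lemma hodd : Summable (fun k : ℕ => ((2*k+1 : ℕ):ℂ)^(-s)) :=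
  (hS hs).comp_injective (fun a b h => by omega)

lemma heven0 : Summable (fun k : ℕ => ((2*k : ℕ):ℂ)^(-s)) :=
  (hS hs).comp_injective (fun a b h => by omega)

lemma heven2 : Summable (fun k : ℕ => ((2*k+2 : ℕ):ℂ)^(-s)) :=
  (hS hs).comp_injective (fun a b h => by omega)

lemma zeta_tsum : riemannZeta s = ∑' n : ℕ, (n:ℂ)^(-s) := by
  rw [zeta_eq_tsum_one_div_nat_cpow hs]
  exact tsum_congr fun n => by rw [cpow_neg, one_div]

lemma even0_eq : ∑' k : ℕ, ((2*k : ℕ):ℂ)^(-s) = 2^(-s) * riemannZeta s := by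
  rw [zeta_tsum hs, ← tsum_mul_left]
  apply tsum_congr
  intro k
  have h1 : ((2*k : ℕ):ℂ) = ((2:ℝ):ℂ) * ((k:ℝ):ℂ) := by push_cast; ring
  rw [h1, mul_cpow_ofReal_nonneg (by norm_num) (Nat.cast_nonneg k)]
  norm_num

lemma even2_eq : ∑' k : ℕ, ((2*k+2 : ℕ):ℂ)^(-s) = 2^(-s) * riemannZeta s := by
  rw [← even0_eq hs, Summable.tsum_eq_zero_add (heven0 hs)]
  have hsne : s ≠ 0 := fun h => by rw [h] at hs; norm_num at hs
  have h0 : ((2*0 : ℕ):ℂ)^(-s) = 0 := by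
    have hz : ((2*0 : ℕ):ℂ) = 0 := by norm_num
    rw [hz, Complex.zero_cpow (neg_ne_zero.mpr hsne)]
  rw [h0, zero_add]
  exact (tsum_congr fun k => by norm_num [show 2*(k+1) = 2*k+2 from by ring]).symm

lemma odd_eq : ∑' k : ℕ, ((2*k+1 : ℕ):ℂ)^(-s) = (1 - 2^(-s)) * riemannZeta s := by
  have h := tsum_even_add_odd (f := fun n : ℕ => (n:ℂ)^(-s)) (heven0 hs) (hodd hs)
  rw [← zeta_tsum hs] at h
  rw [even0_eq hs] at h
  linear_combination h

lemma FF_eq_gt_one : FF s = (1 - 2^((1:ℂ)-s)) * riemannZeta s := by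
  unfold FF
  rw [Summable.tsum_sub (hodd hs) (heven2 hs), odd_eq hs, even2_eq hs]
  have h2 : (2:ℂ)^((1:ℂ)-s) = 2 * 2^(-s) := by
    rw [show (1:ℂ)-s = 1 + (-s) from by ring, Complex.cpow_add _ _ (by norm_num), cpow_one]
  rw [h2]; ring

lemma LF_eq_gt_one : ZMod.LFunction Phi s = (1 - 2^((1:ℂ)-s)) * riemannZeta s := by
  rw [ZMod.LFunction_eq_LSeries Phi hs]
  have hterm : Summable (LSeries.term (fun n : ℕ => Phi n) s) :=
    ZMod.LSeriesSummable_of_one_lt_re Phi hs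
  unfold LSeries
  rw [← tsum_even_add_odd (hterm.comp_injective (fun a b h => by omega))
    (hterm.comp_injective (fun a b h => by omega))]
  have hoddt : ∀ k : ℕ, LSeries.term (fun n : ℕ => Phi n) s (2*k+1) = ((2*k+1 : ℕ):ℂ)^(-s) := by
    intro k
    rw [LSeries.term_of_ne_zero (by omega)]
    have hcast : ((2*k+1 : ℕ) : ZMod 2) = 1 := by
      push_cast
      rw [show (2 : ZMod 2) = 0 by decide]
      ring
    rw [hcast]
    simp [Phi, cpow_neg, one_div]
  have hevent : ∀ k : ℕ, LSeries.term (fun n : ℕ => Phi n) s (2*k) = -((2*k : ℕ):ℂ)^(-s) := by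
    intro k
    rcases Nat.eq_zero_or_pos k with hk | hk
    · subst hk
      have hsne : s ≠ 0 := fun h => by rw [h] at hs; norm_num at hs
      have hz : ((2*0 : ℕ):ℂ) = 0 := by norm_num
      rw [hz, Complex.zero_cpow (neg_ne_zero.mpr hsne), neg_zero]
      simp [LSeries.term]
    · rw [LSeries.term_of_ne_zero (by omega)]
      have hcast : ((2*k : ℕ) : ZMod 2) = 0 := by
        push_cast
        rw [show (2 : ZMod 2) = 0 by decide]
        ring
      rw [hcast]
      simp [Phi, cpow_neg, one_div, neg_div]
  rw [tsum_congr hoddt, tsum_congr hevent, tsum_neg, odd_eq hs, even0_eq hs]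
  have h2 : (2:ℂ)^((1:ℂ)-s) = 2 * 2^(-s) := by
    rw [show (1:ℂ)-s = 1 + (-s) from by ring, Complex.cpow_add _ _ (by norm_num), cpow_one]
  rw [h2]; ring

end gt_one


noncomputable def ZZ : ℂ → ℂ := fun s => (1 - 2^((1:ℂ)-s)) * riemannZeta s

lemma isOpen_V : IsOpen {s : ℂ | 1/4 < s.re} := isOpen_lt continuous_const Complex.continuous_re
lemma isOpen_W : IsOpen {s : ℂ | 1 < s.re} := isOpen_lt continuous_const Complex.continuous_re

lemma LF_diff : Differentiable ℂ (ZMod.LFunction Phi) :=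
  ZMod.differentiable_LFunction_of_sum_zero Phi_sum

lemma two_mem_W : (2:ℂ) ∈ {s : ℂ | 1 < s.re} := by simp

lemma eventually_eq_at_two_F : ZMod.LFunction Phi =ᶠ[nhds (2:ℂ)] FF := by
  apply Filter.eventuallyEq_of_mem (isOpen_W.mem_nhds two_mem_W)
  intro s hs
  rw [LF_eq_gt_one hs, FF_eq_gt_one hs]

lemma eventually_eq_at_two_Z : ZMod.LFunction Phi =ᶠ[nhds (2:ℂ)] ZZ := by
  apply Filter.eventuallyEq_of_mem (isOpen_W.mem_nhds two_mem_W)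
  intro s hs
  rw [LF_eq_gt_one hs]; rfl

lemma LF_eq_FF_on_V : Set.EqOn (ZMod.LFunction Phi) FF {s : ℂ | 1/4 < s.re} := by
  apply AnalyticOnNhd.eqOn_of_preconnected_of_eventuallyEq
    (LF_diff.differentiableOn.analyticOnNhd isOpen_V)
    (FF_diff.analyticOnNhd isOpen_V)
    ((convex_halfSpace_re_gt (1/4)).isPreconnected)
    (show (2:ℂ) ∈ {s : ℂ | 1/4 < s.re} by simp; norm_num)
    eventually_eq_at_two_F

lemma LF_eq_ZZ_on : Set.EqOn (ZMod.LFunction Phi) ZZ {(1:ℂ)}ᶜ := by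
  apply AnalyticOnNhd.eqOn_of_preconnected_of_eventuallyEq
    (LF_diff.differentiableOn.analyticOnNhd isOpen_compl_singleton)
    ?hz
    ((isConnected_compl_singleton_of_one_lt_rank (by rw [rank_real_complex]; norm_num) 1).isPreconnected)
    (show (2:ℂ) ∈ ({(1:ℂ)}ᶜ : Set ℂ) by norm_num)
    eventually_eq_at_two_Z
  case hz =>
    apply DifferentiableOn.analyticOnNhd _ isOpen_compl_singleton
    intro s hs
    apply DifferentiableAt.differentiableWithinAt
    apply DifferentiableAt.mul
    · apply DifferentiableAt.sub (differentiableAt_const _)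
      exact ((differentiable_id.const_sub (1:ℂ)).const_cpow (Or.inl (by norm_num))).differentiableAt
    · exact differentiableAt_riemannZeta (by simpa using hs)

lemma FF_half_eq : FF (1/2 : ℂ) = (1 - 2^((1:ℂ)-(1/2:ℂ))) * riemannZeta (1/2) := by
  have h1 : FF (1/2 : ℂ) = ZMod.LFunction Phi (1/2) :=
    (LF_eq_FF_on_V (show (1/2:ℂ) ∈ {s : ℂ | 1/4 < s.re} by simp; norm_num)).symm
  have h2 : ZMod.LFunction Phi (1/2) = ZZ (1/2) :=
    LF_eq_ZZ_on (show (1/2:ℂ) ∈ ({(1:ℂ)}ᶜ : Set ℂ) by norm_num)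
  rw [h1, h2]; rfl


lemma ttm_ofReal (k : ℕ) :
    ((ttm k : ℝ) : ℂ) = ((2*k+1 : ℕ) : ℂ)^(-(1/2:ℂ)) - ((2*k+2 : ℕ) : ℂ)^(-(1/2:ℂ)) := by
  have cast1 : ∀ m : ℕ, ((m : ℕ) : ℂ)^(-(1/2:ℂ)) = (((m:ℝ) ^ (-(1/2):ℝ) : ℝ) : ℂ) := by
    intro m
    rw [Complex.ofReal_cpow (Nat.cast_nonneg m)]
    push_cast
    norm_num
  rw [cast1 (2*k+1), cast1 (2*k+2)]
  unfold ttm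
  rw [← Complex.ofReal_sub]
  congr 1
  rw [Real.rpow_neg (by positivity), Real.rpow_neg (by positivity),
    ← Real.sqrt_eq_rpow, ← Real.sqrt_eq_rpow]
  push_cast
  norm_num

lemma FF_half_real : FF (1/2 : ℂ) = ((Gval : ℝ) : ℂ) := by
  unfold FF Gval
  rw [Complex.ofReal_tsum]
  exact tsum_congr fun k => (ttm_ofReal k).symm

lemma sqrt_two_cpow : (2:ℂ)^((1:ℂ)-(1/2:ℂ)) = ((Real.sqrt 2 : ℝ) : ℂ) := by
  have h1 : (1:ℂ)-(1/2:ℂ) = (((1/2:ℝ)):ℂ) := by norm_num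
  rw [h1, show (2:ℂ) = (((2:ℝ)):ℂ) from by norm_num,
    ← Complex.ofReal_cpow (by norm_num), ← Real.sqrt_eq_rpow]

lemma zeta_half_val : riemannZeta (1/2 : ℂ) = (((Gval / (1 - Real.sqrt 2)) : ℝ) : ℂ) := by
  have h := FF_half_eq
  rw [FF_half_real, sqrt_two_cpow] at h
  have hs2 : (1.4:ℝ) ≤ Real.sqrt 2 := (Real.le_sqrt' (by norm_num)).mpr (by norm_num)
  have hne : (1:ℂ) - ((Real.sqrt 2 : ℝ) : ℂ) ≠ 0 := by
    intro hz
    rw [show (1:ℂ) = ((1:ℝ):ℂ) from by norm_num, ← Complex.ofReal_sub] at hz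
    have := Complex.ofReal_eq_zero.mp hz
    linarith
  rw [Complex.ofReal_div]
  rw [eq_div_iff (by
    rw [Complex.ofReal_sub, Complex.ofReal_one]
    exact hne)]
  rw [Complex.ofReal_sub, Complex.ofReal_one]
  rw [h]; ring

end ZetaHalfAux

end ZetaHalfAux

open ZetaHalfAux in
theorem stmt19 :
    (riemannZeta (1 / 2)).im = 0 ∧
    -3 / 2 + 1 / (15 * Real.sqrt 5) < (riemannZeta (1 / 2)).re ∧
    (riemannZeta (1 / 2)).re < -35 / 24 := by
  have hval := zeta_half_val
  have hs2a : (1.41421356:ℝ) ≤ Real.sqrt 2 := (Real.le_sqrt' (by norm_num)).mpr (by norm_num)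
  have hs2b : Real.sqrt 2 ≤ 1.41421357 := Real.sqrt_le_iff.mpr ⟨by norm_num, by norm_num⟩
  have hs5a : (2.23606797:ℝ) ≤ Real.sqrt 5 := (Real.le_sqrt' (by norm_num)).mpr (by norm_num)
  have hs5b : Real.sqrt 5 ≤ 2.23606798 := Real.sqrt_le_iff.mpr ⟨by norm_num, by norm_num⟩
  have hG := G_bounds
  have hden : 1 - Real.sqrt 2 < 0 := by linarith
  have hq1 : (1:ℝ)/(15*Real.sqrt 5) ≤ 1/(15*2.23606797) :=
    one_div_le_one_div_of_le (by norm_num) (by nlinarith)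
  have hq2 : (1:ℝ)/(15*2.23606798) ≤ 1/(15*Real.sqrt 5) :=
    one_div_le_one_div_of_le (by positivity) (by nlinarith)
  refine ⟨by rw [hval]; exact Complex.ofReal_im _, ?_, ?_⟩
  · rw [hval, Complex.ofReal_re]
    rw [lt_div_iff_of_neg hden]
    nlinarith [hG.2, hq1, hs2a]
  · rw [hval, Complex.ofReal_re]
    rw [div_lt_iff_of_neg hden]
    nlinarith [hG.1, hs2b]
end
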